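/- arXiv:math/9802087 — 3 statements merged into one kernel-verified Lean document; each statement's English description precedes it below -/
import Mathlib

section
/- Let ρ and τ be nonzero real numbers. Suppose (Γ, d) is a first order differential calculus on X satisfying, for all k, l ∈ {1, …, N}: dz_k·z_l = q⁻¹ Σ_{a,b} (R⁻¹)^{ab}_{kl} z_a·dz_b − q⁻²(ρ/τ)(s̃ρ−1) z_k z_l·θ₊ − (ρ/τ)(s̃τ−q²) z_k z_l·θ₋; dz*_k·z*_l = q Σ_{a,b} R̄^{ab}_{kl} z*_a·dz*_b − (τ/ρ)(s̃ρ−1) z*_k z*_l·θ₊ − q²(τ/ρ)(s̃τ−q²) z*_k z*_l·θ₋; dz_k·z*_l = q Σ_{a,b} (R←⁻¹)^{ab}_{kl} z*_a·dz_b − q⁻²ρ q^{2k} δ_{kl} θ₊ − τ q^{2k} δ_{kl} θ₋ + (sρ−1) z_k z*_l·θ₊ + q²(sτ−1) z_k z*_l·θ₋; dz*_k·z_l = q⁻¹ Σ_{a,b} (R→)^{ab}_{kl} z_a·dz*_b − q^{2N−2}ρ δ_{kl} θ₊ − q^{2N}τ δ_{kl} θ₋ + (sρ−1) z*_k z_l·θ₊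 + q²(sτ−1) z*_k z_l·θ₋. Then the one-form θ₀ := θ₊ + q²(τ/ρ) θ₋ quasi-commutes with the generators of X: for every m ∈ {1, …, N} there exist complex numbers c_m and c′_m such that θ₀·z_m = c_m z_m·θ₀ and θ₀·z*_m = c′_m z*_m·θ₀. -/
noncomputable section

open scoped BigOperators

namespace QSphere

/-- Generator index set: `Sum.inl i` stands for `z_{i+1}`, `Sum.inr i` for `z*_{i+1}`. -/
abbrev GenIdx (N : ℕ) := Fin N ⊕ Fin N

/-- The free unital `ℂ`-algebra on the `2N` generators. -/
abbrev FA (N : ℕ) := FreeAlgebra ℂ (GenIdx N)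

/-- The generator `z_{i+1}` of the free algebra. -/
def zf {N : ℕ} (i : Fin N) : FA N := FreeAlgebra.ι ℂ (Sum.inl i)

/-- The generator `z*_{i+1}` of the free algebra. -/
def zsf {N : ℕ} (i : Fin N) : FA N := FreeAlgebra.ι ℂ (Sum.inr i)

/-- `q` viewed as a complex number. -/
def qc (q : ℝ) : ℂ := (q : ℂ)

/-- `Q = q - q⁻¹` as a complex number. -/
def Qc (q : ℝ) : ℂ := qc q - (qc q)⁻¹

/-- The (1-based) integer index of `i : Fin N`. -/
def exZ {N : ℕ} (i : Fin N) : ℤ := (i : ℕ) + 1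

/-- The defining relations of the quantum sphere `S_q^{2N-1}`:
the two-sided ideal generated by the listed elements is divided out. -/
inductive SphereRel (N : ℕ) (q : ℝ) : FA N → FA N → Prop
  | zz {i j : Fin N} (h : i < j) :
      SphereRel N q (zf i * zf j) (qc q • (zf j * zf i))
  | ss {i j : Fin N} (h : i < j) :
      SphereRel N q (zsf i * zsf j) ((qc q)⁻¹ • (zsf j * zsf i))
  | zs {i j : Fin N} (h : i ≠ j) :
      SphereRel N q (zf i * zsf j) (qc q • (zsf j * zf i))
  | qcomm (i : Fin N) :
      SphereRel N q
        (zf i * zsf i - zsf i * zf i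
          + ((qc q)⁻¹ * Qc q) • ∑ k ∈ Finset.univ.filter (fun k => i < k), zf k * zsf k)
        0
  | sphere : SphereRel N q (∑ i, zf i * zsf i) 1

/-- The quantum sphere `S_q^{2N-1}`. -/
abbrev X (N : ℕ) (q : ℝ) := RingQuot (SphereRel N q)

/-- The generator `z_{i+1}` of the quantum sphere. -/
def Z (N : ℕ) (q : ℝ) (i : Fin N) : X N q := RingQuot.mkAlgHom ℂ (SphereRel N q) (zf i)

/-- The generator `z*_{i+1}` of the quantum sphere. -/
def Zs (N : ℕ) (q : ℝ) (i : Fin N) : X N q := RingQuot.mkAlgHom ℂ (SphereRel N q) (zsf i)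

/-- The R-matrix coefficient `R^{ij}_{kl}`. -/
def Rm (q : ℝ) {N : ℕ} (i j k l : Fin N) : ℂ :=
  if i = l ∧ j = k ∧ i ≠ j then 1
  else if i = j ∧ j = k ∧ k = l then qc q
  else if i = k ∧ j = l ∧ i < j then Qc q
  else 0

/-- The inverse R-matrix coefficient `(R⁻¹)^{ij}_{kl}`. -/
def Rinv (q : ℝ) {N : ℕ} (i j k l : Fin N) : ℂ :=
  if i = l ∧ j = k ∧ i ≠ j then 1
  else if i = j ∧ j = k ∧ k = l then (qc q)⁻¹
  else if i = k ∧ j = l ∧ j < i then -(Qc q)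
  else 0

/-- `R̄^{ij}_{kl} = R^{lk}_{ji}`. -/
def Rbar (q : ℝ) {N : ℕ} (i j k l : Fin N) : ℂ := Rm q l k j i

/-- `(R̄⁻¹)^{ij}_{kl} = (R⁻¹)^{lk}_{ji}`. -/
def Rbarinv (q : ℝ) {N : ℕ} (i j k l : Fin N) : ℂ := Rinv q l k j i

/-- `(R→)^{ij}_{kl} = R^{ki}_{lj}`. -/
def Rright (q : ℝ) {N : ℕ} (i j k l : Fin N) : ℂ := Rm q k i l j

/-- `(R←⁻¹)^{ij}_{kl} = q^{2l-2i} (R⁻¹)^{jl}_{ik}`. -/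
def Rlinv (q : ℝ) {N : ℕ} (i j k l : Fin N) : ℂ :=
  qc q ^ (2 * exZ l - 2 * exZ i) * Rinv q j l i k

/-- `s = Σ_{i=0}^{N-1} q^{2i}`. -/
def sP (N : ℕ) (q : ℝ) : ℂ := ∑ i ∈ Finset.range N, qc q ^ (2 * i)

/-- `s̃ = Σ_{i=1}^{N-1} q^{2i}`. -/
def sT (N : ℕ) (q : ℝ) : ℂ := ∑ i ∈ Finset.Ico 1 N, qc q ^ (2 * i)

/-- Kronecker delta. -/
def kdelta {N : ℕ} (k l : Fin N) : ℂ := if k = l then 1 else 0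


/-- The data of a candidate first order differential calculus on the quantum
sphere: an `X`-bimodule `Γ` (axioms are stated separately in `IsFODC`)
together with a differential map `d`. -/
structure PreCalc (N : ℕ) (q : ℝ) where
  Γ : Type
  [instAdd : AddCommGroup Γ]
  [instMod : Module ℂ Γ]
  lact : X N q → Γ → Γ
  ract : Γ → X N q → Γ
  d : X N q → Γ

attribute [instance] PreCalc.instAdd PreCalc.instMod

namespace PreCalc

variable {N : ℕ} {q : ℝ}

/-- `(Γ, d)` is a first order differential calculus on `X = S_q^{2N-1}`:
`Γ` is an `X`-bimodule (left and right module structures commuting with each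
other and compatible with the `ℂ`-scalar multiplication), `d` is `ℂ`-linear
and satisfies the Leibniz rule. -/
def IsFODC (D : PreCalc N q) : Prop :=
  (∀ (x : X N q) (ω η : D.Γ), D.lact x (ω + η) = D.lact x ω + D.lact x η) ∧
  (∀ (x y : X N q) (ω : D.Γ), D.lact (x + y) ω = D.lact x ω + D.lact y ω) ∧
  (∀ (x y : X N q) (ω : D.Γ), D.lact (x * y) ω = D.lact x (D.lact y ω)) ∧
  (∀ ω : D.Γ, D.lact 1 ω = ω) ∧
  (∀ (c : ℂ) (x : X N q) (ω : D.Γ), D.lact (c • x) ω = c • D.lact x ω) ∧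
  (∀ (c : ℂ) (x : X N q) (ω : D.Γ), D.lact x (c • ω) = c • D.lact x ω) ∧
  (∀ (ω η : D.Γ) (x : X N q), D.ract (ω + η) x = D.ract ω x + D.ract η x) ∧
  (∀ (ω : D.Γ) (x y : X N q), D.ract ω (x + y) = D.ract ω x + D.ract ω y) ∧
  (∀ (ω : D.Γ) (x y : X N q), D.ract ω (x * y) = D.ract (D.ract ω x) y) ∧
  (∀ ω : D.Γ, D.ract ω 1 = ω) ∧
  (∀ (c : ℂ) (ω : D.Γ) (x : X N q), D.ract (c • ω) x = c • D.ract ω x) ∧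
  (∀ (c : ℂ) (ω : D.Γ) (x : X N q), D.ract ω (c • x) = c • D.ract ω x) ∧
  (∀ (x : X N q) (ω : D.Γ) (y : X N q), D.ract (D.lact x ω) y = D.lact x (D.ract ω y)) ∧
  (∀ x y : X N q, D.d (x + y) = D.d x + D.d y) ∧
  (∀ (c : ℂ) (x : X N q), D.d (c • x) = c • D.d x) ∧
  (∀ x y : X N q, D.d (x * y) = D.ract (D.d x) y + D.lact x (D.d y))

/-- `dz_i`. -/
def dz (D : PreCalc N q) (i : Fin N) : D.Γ := D.d (Z N q i)

/-- `dz*_i`. -/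
def dzs (D : PreCalc N q) (i : Fin N) : D.Γ := D.d (Zs N q i)

/-- The invariant one-form `θ₊ = Σ_i z_i·dz*_i`. -/
def thP (D : PreCalc N q) : D.Γ := ∑ i, D.lact (Z N q i) (D.dzs i)

/-- The invariant one-form `θ₋ = Σ_i q^{-2i} z*_i·dz_i`. -/
def thM (D : PreCalc N q) : D.Γ :=
  ∑ i, (qc q ^ (-(2 * exZ i))) • D.lact (Zs N q i) (D.dz i)

/-- `Σ_{a,b} (R⁻¹)^{ab}_{kl} z_a·dz_b`. -/
def SRinv (D : PreCalc N q) (k l : Fin N) : D.Γ :=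
  ∑ a, ∑ b, Rinv q a b k l • D.lact (Z N q a) (D.dz b)

/-- `Σ_{a,b} R̄^{ab}_{kl} z*_a·dz*_b`. -/
def SRbar (D : PreCalc N q) (k l : Fin N) : D.Γ :=
  ∑ a, ∑ b, Rbar q a b k l • D.lact (Zs N q a) (D.dzs b)

/-- `Σ_{a,b} (R←⁻¹)^{ab}_{kl} z*_a·dz_b`. -/
def SRlinv (D : PreCalc N q) (k l : Fin N) : D.Γ :=
  ∑ a, ∑ b, Rlinv q a b k l • D.lact (Zs N q a) (D.dz b)

/-- `Σ_{a,b} (R→)^{ab}_{kl} z_a·dz*_b`. -/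
def SRright (D : PreCalc N q) (k l : Fin N) : D.Γ :=
  ∑ a, ∑ b, Rright q a b k l • D.lact (Z N q a) (D.dzs b)

/-- `z_k·dz_l`. -/
def lzdz (D : PreCalc N q) (k l : Fin N) : D.Γ := D.lact (Z N q k) (D.dz l)
/-- `z*_k·dz*_l`. -/
def lzsdzs (D : PreCalc N q) (k l : Fin N) : D.Γ := D.lact (Zs N q k) (D.dzs l)
/-- `z_k·dz*_l`. -/
def lzdzs (D : PreCalc N q) (k l : Fin N) : D.Γ := D.lact (Z N q k) (D.dzs l)
/-- `z*_k·dz_l`. -/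
def lzsdz (D : PreCalc N q) (k l : Fin N) : D.Γ := D.lact (Zs N q k) (D.dz l)

/-- `z_k z_l·θ₊`. -/
def zzP (D : PreCalc N q) (k l : Fin N) : D.Γ := D.lact (Z N q k * Z N q l) D.thP
/-- `z_k z_l·θ₋`. -/
def zzM (D : PreCalc N q) (k l : Fin N) : D.Γ := D.lact (Z N q k * Z N q l) D.thM
/-- `z*_k z*_l·θ₊`. -/
def zszsP (D : PreCalc N q) (k l : Fin N) : D.Γ := D.lact (Zs N q k * Zs N q l) D.thP
/-- `z*_k z*_l·θ₋`. -/
def zszsM (D : PreCalc N q) (k l : Fin N) : D.Γ := D.lact (Zs N q k * Zs N q l) D.thM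
/-- `z_k z*_l·θ₊`. -/
def zzsP (D : PreCalc N q) (k l : Fin N) : D.Γ := D.lact (Z N q k * Zs N q l) D.thP
/-- `z_k z*_l·θ₋`. -/
def zzsM (D : PreCalc N q) (k l : Fin N) : D.Γ := D.lact (Z N q k * Zs N q l) D.thM
/-- `z*_k z_l·θ₊`. -/
def zszP (D : PreCalc N q) (k l : Fin N) : D.Γ := D.lact (Zs N q k * Z N q l) D.thP
/-- `z*_k z_l·θ₋`. -/
def zszM (D : PreCalc N q) (k l : Fin N) : D.Γ := D.lact (Zs N q k * Z N q l) D.thM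

/-- `dz_1,…,dz_N,dz*_1,…,dz*_N` form a free basis of `Γ` as a left `X`-module. -/
def FreeBasis (D : PreCalc N q) : Prop :=
  (∀ ω : D.Γ, ∃ a b : Fin N → X N q,
      ω = ∑ i, D.lact (a i) (D.dz i) + ∑ i, D.lact (b i) (D.dzs i)) ∧
  (∀ a b : Fin N → X N q,
      ∑ i, D.lact (a i) (D.dz i) + ∑ i, D.lact (b i) (D.dzs i) = 0 →
      ∀ i, a i = 0 ∧ b i = 0)

/-- The relation `θ₊ + λ θ₋ = 0` holds in `Γ`. -/
def RelHolds (D : PreCalc N q) (lam : ℂ) : Prop := D.thP + lam • D.thM = 0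

/-- `dz_1,…,dz*_N` generate `Γ` as a left `X`-module and all left-module
relations between them are exactly the ones generated by `θ₊ + λ θ₋ = 0`. -/
def GenRel (D : PreCalc N q) (lam : ℂ) : Prop :=
  (∀ ω : D.Γ, ∃ a b : Fin N → X N q,
      ω = ∑ i, D.lact (a i) (D.dz i) + ∑ i, D.lact (b i) (D.dzs i)) ∧
  (∀ a b : Fin N → X N q,
      (∑ i, D.lact (a i) (D.dz i) + ∑ i, D.lact (b i) (D.dzs i) = 0 ↔
        ∃ c : X N q, ∀ i, a i = (lam * qc q ^ (-(2 * exZ i))) • (c * Zs N q i)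
          ∧ b i = c * Z N q i)) ∧
  D.RelHolds lam

/-- The one-form `μ θ₊ + λ θ₋`. -/
def theta0 (D : PreCalc N q) (mu lam : ℂ) : D.Γ := mu • D.thP + lam • D.thM

/-- `c • ω` (scalar multiple of a one-form). -/
def smulG (D : PreCalc N q) (c : ℂ) (ω : D.Γ) : D.Γ := c • ω

/-- The one-form `θ₀` quasi-commutes with all generators of `X`. -/
def QuasiComm (D : PreCalc N q) (θ₀ : D.Γ) : Prop :=
  ∀ m : Fin N, ∃ c c' : ℂ,
    D.ract θ₀ (Z N q m) = c • D.lact (Z N q m) θ₀ ∧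
    D.ract θ₀ (Zs N q m) = c' • D.lact (Zs N q m) θ₀

/-- The calculus is inner with generating one-form `θ`. -/
def Inner (D : PreCalc N q) (θ : D.Γ) : Prop :=
  ∀ x : X N q, D.d x = D.ract θ x - D.lact x θ

/-- Structure equations of the calculus `Γ_{ατ}`. -/
def EqAT (D : PreCalc N q) (α τ : ℝ) : Prop :=
  ∀ k l : Fin N,
    D.ract (D.dz k) (Z N q l) =
        (qc q * (α:ℂ)) • D.SRinv k l
        + (qc q ^ 2 * (α:ℂ) - 1) • D.lzdz k l
        + (qc q ^ 2 * (α:ℂ) ^ 2 * (1 - sT N q * (τ:ℂ))) • D.zzP k l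
        + (qc q ^ 2 * (1 - (α:ℂ) * sT N q * (τ:ℂ))) • D.zzM k l
    ∧ D.ract (D.dzs k) (Zs N q l) =
        ((qc q)⁻¹ * (α:ℂ)⁻¹) • D.SRbar k l
        + (qc q ^ (-2:ℤ) * (α:ℂ)⁻¹ - 1) • D.lzsdzs k l
        + (1 - sT N q * (τ:ℂ)) • D.zszsP k l
        + ((α:ℂ)⁻¹ ^ 2 * (1 - (α:ℂ) * sT N q * (τ:ℂ))) • D.zszsM k l
    ∧ D.ract (D.dz k) (Zs N q l) =
        ((qc q)⁻¹ * (α:ℂ)⁻¹) • D.SRlinv k l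
        + (qc q ^ 2 * (α:ℂ) - 1) • D.lzdzs k l
        - (qc q ^ 2 * (α:ℂ) * (1 - sP N q * (τ:ℂ))) • D.zzsP k l
        - ((α:ℂ) * (τ:ℂ) * qc q ^ (2 * exZ k) * kdelta k l) • D.thP
        - ((α:ℂ)⁻¹ * (1 - qc q ^ 2 * (α:ℂ) * sP N q * (τ:ℂ))) • D.zzsM k l
        - ((τ:ℂ) * qc q ^ (2 * exZ k) * kdelta k l) • D.thM
    ∧ D.ract (D.dzs k) (Z N q l) =
        (qc q * (α:ℂ)) • D.SRright k l
        + (qc q ^ (-2:ℤ) * (α:ℂ)⁻¹ - 1) • D.lzsdz k l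
        - (qc q ^ 2 * (α:ℂ) * (1 - sP N q * (τ:ℂ))) • D.zszP k l
        - ((α:ℂ) * (τ:ℂ) * kdelta k l) • D.thP
        - ((α:ℂ)⁻¹ * (1 - qc q ^ 2 * (α:ℂ) * sP N q * (τ:ℂ))) • D.zszM k l
        - ((τ:ℂ) * kdelta k l) • D.thM

/-- Structure equations of the calculus `Γ'_{αω}`. -/
def EqAP (D : PreCalc N q) (α ω : ℝ) : Prop :=
  ∀ k l : Fin N,
    D.ract (D.dz k) (Z N q l) =
        (qc q * (α:ℂ)) • D.SRinv k l
        + (qc q ^ 2 * (α:ℂ) - 1) • D.lzdz k l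
        + (ω:ℂ) • D.zzP k l
        + ((α:ℂ)⁻¹ * (ω:ℂ) - qc q ^ 2 * ((α:ℂ) - 1)) • D.zzM k l
    ∧ D.ract (D.dzs k) (Zs N q l) =
        ((qc q)⁻¹ * (α:ℂ)⁻¹) • D.SRbar k l
        + (qc q ^ (-2:ℤ) * (α:ℂ)⁻¹ - 1) • D.lzsdzs k l
        + (qc q ^ 2 * (α:ℂ) * (ω:ℂ)⁻¹ - ((α:ℂ)⁻¹ - 1)) • D.zszsP k l
        + (qc q ^ 2 * (ω:ℂ)⁻¹) • D.zszsM k l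
    ∧ D.ract (D.dz k) (Zs N q l) =
        ((qc q)⁻¹ * (α:ℂ)⁻¹) • D.SRlinv k l
        + (qc q ^ 2 * (α:ℂ) - 1) • D.lzdzs k l
        - (qc q ^ 2 * (α:ℂ)) • D.zzsP k l
        - (α:ℂ)⁻¹ • D.zzsM k l
    ∧ D.ract (D.dzs k) (Z N q l) =
        (qc q * (α:ℂ)) • D.SRright k l
        + (qc q ^ (-2:ℤ) * (α:ℂ)⁻¹ - 1) • D.lzsdz k l
        - (qc q ^ 2 * (α:ℂ)) • D.zszP k l
        - (α:ℂ)⁻¹ • D.zszM k l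

/-- Structure equations of the calculus `Γ''_{ωψ}`. -/
def EqPP (D : PreCalc N q) (ω ψ : ℝ) : Prop :=
  ∀ k l : Fin N,
    D.ract (D.dz k) (Z N q l) =
        (qc q)⁻¹ • D.SRinv k l
        + (ω:ℂ) • D.zzP k l
        + (qc q ^ 2 * (ω:ℂ) * (ψ:ℂ) - 1) • D.zzM k l
    ∧ D.ract (D.dzs k) (Zs N q l) =
        qc q • D.SRbar k l
        + ((ψ:ℂ) - qc q ^ 2) • D.zszsP k l
        + (qc q ^ 2 * (ω:ℂ)⁻¹) • D.zszsM k l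
    ∧ D.ract (D.dz k) (Zs N q l) =
        qc q • D.SRlinv k l
        - D.zzsP k l
        - (qc q ^ 2:ℂ) • D.zzsM k l
    ∧ D.ract (D.dzs k) (Z N q l) =
        (qc q)⁻¹ • D.SRright k l
        - D.zszP k l
        - (qc q ^ 2:ℂ) • D.zszM k l

/-- Structure equations of the calculus `Γ'''_{ρτ}`. -/
def EqPPP (D : PreCalc N q) (ρ τ : ℝ) : Prop :=
  ∀ k l : Fin N,
    D.ract (D.dz k) (Z N q l) =
        (qc q)⁻¹ • D.SRinv k l
        - (qc q ^ (-2:ℤ) * ((ρ:ℂ) / (τ:ℂ)) * (sT N q * (ρ:ℂ) - 1)) • D.zzP k l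
        - (((ρ:ℂ) / (τ:ℂ)) * (sT N q * (τ:ℂ) - qc q ^ 2)) • D.zzM k l
    ∧ D.ract (D.dzs k) (Zs N q l) =
        qc q • D.SRbar k l
        - (((τ:ℂ) / (ρ:ℂ)) * (sT N q * (ρ:ℂ) - 1)) • D.zszsP k l
        - (qc q ^ 2 * ((τ:ℂ) / (ρ:ℂ)) * (sT N q * (τ:ℂ) - qc q ^ 2)) • D.zszsM k l
    ∧ D.ract (D.dz k) (Zs N q l) =
        qc q • D.SRlinv k l
        - (qc q ^ (-2:ℤ) * (ρ:ℂ) * qc q ^ (2 * exZ k) * kdelta k l) • D.thP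
        - ((τ:ℂ) * qc q ^ (2 * exZ k) * kdelta k l) • D.thM
        + (sP N q * (ρ:ℂ) - 1) • D.zzsP k l
        + (qc q ^ 2 * (sP N q * (τ:ℂ) - 1)) • D.zzsM k l
    ∧ D.ract (D.dzs k) (Z N q l) =
        (qc q)⁻¹ • D.SRright k l
        - (qc q ^ (2 * (N:ℤ) - 2) * (ρ:ℂ) * kdelta k l) • D.thP
        - (qc q ^ (2 * (N:ℤ)) * (τ:ℂ) * kdelta k l) • D.thM
        + (sP N q * (ρ:ℂ) - 1) • D.zszP k l
        + (qc q ^ 2 * (sP N q * (τ:ℂ) - 1)) • D.zszM k l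

/-- Structure equations of the calculus `Γ̃_λ`. -/
def EqTl (D : PreCalc N q) (lam : ℂ) : Prop :=
  ∀ k l : Fin N,
    D.ract (D.dz k) (Z N q l) =
        (qc q * lam⁻¹) • D.SRinv k l
        + (qc q ^ 2 * lam⁻¹ - 1) • D.lzdz k l
        + (qc q ^ 2 * lam⁻¹ * (lam⁻¹ - 1)) • D.zzP k l
    ∧ D.ract (D.dzs k) (Zs N q l) =
        ((qc q)⁻¹ * lam) • D.SRbar k l
        + (qc q ^ (-2:ℤ) * lam - 1) • D.lzsdzs k l
        - (lam - 1) • D.zszsP k l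
    ∧ D.ract (D.dz k) (Zs N q l) =
        ((qc q)⁻¹ * lam) • D.SRlinv k l
        + (qc q ^ 2 * lam⁻¹ - 1) • D.lzdzs k l
        - (qc q ^ 2 * lam⁻¹ - 1) • D.zzsP k l
    ∧ D.ract (D.dzs k) (Z N q l) =
        (qc q * lam⁻¹) • D.SRright k l
        + (qc q ^ (-2:ℤ) * lam - 1) • D.lzsdz k l
        - (qc q ^ 2 * lam⁻¹ - 1) • D.zszP k l

/-- Structure equations of the calculus `Γ̃'_λ`. -/
def EqTp (D : PreCalc N q) (lam : ℂ) : Prop :=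
  ∀ k l : Fin N,
    D.ract (D.dz k) (Z N q l) =
        (qc q)⁻¹ • D.SRinv k l
        - (lam⁻¹ * (qc q ^ 4 * lam⁻¹ - 1)) • D.zzP k l
    ∧ D.ract (D.dzs k) (Zs N q l) =
        qc q • D.SRbar k l
        - (qc q ^ (-2:ℤ) * lam * (qc q ^ 4 * lam⁻¹ - 1)) • D.zszsP k l
    ∧ D.ract (D.dz k) (Zs N q l) =
        qc q • D.SRlinv k l
        + (qc q ^ 2 * lam⁻¹ - 1) • D.zzsP k l
    ∧ D.ract (D.dzs k) (Z N q l) =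
        (qc q)⁻¹ • D.SRright k l
        + (qc q ^ 2 * lam⁻¹ - 1) • D.zszP k l

/-- Structure equations of the calculus `Γ̃''_λ` (for `λ ∉ {0,∞}`). -/
def EqTpp (D : PreCalc N q) (lam : ℂ) : Prop :=
  ∀ k l : Fin N,
    D.ract (D.dz k) (Z N q l) = (qc q)⁻¹ • D.SRinv k l
    ∧ D.ract (D.dzs k) (Zs N q l) = qc q • D.SRbar k l
    ∧ D.ract (D.dz k) (Zs N q l) =
        qc q • D.SRlinv k l
        + (qc q ^ (-2:ℤ) * (sT N q)⁻¹ * (qc q ^ 4 * lam⁻¹ - 1)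
            * qc q ^ (2 * exZ k) * kdelta k l) • D.thP
        - ((sT N q)⁻¹ * (qc q ^ (2 * (N:ℤ) + 2) * lam⁻¹ - 1)) • D.zzsP k l
    ∧ D.ract (D.dzs k) (Z N q l) =
        (qc q)⁻¹ • D.SRright k l
        + (qc q ^ (-2:ℤ) * (sT N q)⁻¹ * (qc q ^ 4 * lam⁻¹ - 1) * kdelta k l) • D.thP
        - ((sT N q)⁻¹ * (qc q ^ (2 * (N:ℤ) + 2) * lam⁻¹ - 1)) • D.zszP k l

/-- Structure equations of the calculus `Γ̃°_λ`. -/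
def EqTo (D : PreCalc N q) (lam : ℂ) : Prop :=
  ∀ k l : Fin N,
    D.ract (D.dz k) (Z N q l) =
        (qc q * lam⁻¹) • D.SRinv k l
        + (qc q ^ 2 * lam⁻¹ - 1) • D.lzdz k l
        + (qc q ^ 2 * lam⁻¹ * (lam⁻¹ - 1)) • D.zzP k l
    ∧ D.ract (D.dzs k) (Zs N q l) =
        qc q • D.SRbar k l
        - (qc q ^ (-2:ℤ) * lam * (qc q ^ 4 * lam⁻¹ - 1)) • D.zszsP k l
    ∧ D.ract (D.dz k) (Zs N q l) = ((qc q)⁻¹ * lam) • D.SRlinv k l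
    ∧ D.ract (D.dzs k) (Z N q l) =
        (qc q)⁻¹ • D.SRright k l
        + (qc q ^ (-2:ℤ) * lam - 1) • D.lzsdz k l

/-- Structure equations of the calculus `Γ̃°°_λ`. -/
def EqToo (D : PreCalc N q) (lam : ℂ) : Prop :=
  ∀ k l : Fin N,
    D.ract (D.dz k) (Z N q l) =
        (qc q)⁻¹ • D.SRinv k l
        - (lam⁻¹ * (qc q ^ 4 * lam⁻¹ - 1)) • D.zzP k l
    ∧ D.ract (D.dzs k) (Zs N q l) =
        ((qc q)⁻¹ * lam) • D.SRbar k l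
        + (qc q ^ (-2:ℤ) * lam - 1) • D.lzsdzs k l
        - (lam - 1) • D.zszsP k l
    ∧ D.ract (D.dz k) (Zs N q l) =
        qc q • D.SRlinv k l
        + (qc q ^ 2 * lam⁻¹ - 1) • D.lzdzs k l
    ∧ D.ract (D.dzs k) (Z N q l) = (qc q * lam⁻¹) • D.SRright k l

end PreCalc

end QSphere

namespace QSphere

section AlgebraLemmas

variable {N : ℕ} {q : ℝ}

lemma hq0_of (hq : q ≠ 0) : qc q ≠ 0 := by
  simpa [qc, Complex.ofReal_ne_zero] using hq

lemma Xzz {i j : Fin N} (h : i < j) :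
    Z N q i * Z N q j = qc q • (Z N q j * Z N q i) := by
  have h' := RingQuot.mkAlgHom_rel ℂ (SphereRel.zz (N := N) (q := q) h)
  simpa [Z, map_mul, map_smul] using h'

lemma Xss {i j : Fin N} (h : i < j) :
    Zs N q i * Zs N q j = (qc q)⁻¹ • (Zs N q j * Zs N q i) := by
  have h' := RingQuot.mkAlgHom_rel ℂ (SphereRel.ss (N := N) (q := q) h)
  simpa [Zs, map_mul, map_smul] using h'

lemma Xzs {i j : Fin N} (h : i ≠ j) :
    Z N q i * Zs N q j = qc q • (Zs N q j * Z N q i) := by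
  have h' := RingQuot.mkAlgHom_rel ℂ (SphereRel.zs (N := N) (q := q) h)
  simpa [Z, Zs, map_mul, map_smul] using h'

lemma Xsph : (∑ i, Z N q i * Zs N q i) = (1 : X N q) := by
  have h' := RingQuot.mkAlgHom_rel ℂ (SphereRel.sphere (N := N) (q := q))
  simpa [Z, Zs, map_sum, map_mul, map_one] using h'

lemma Xqc (i : Fin N) :
    Z N q i * Zs N q i = Zs N q i * Z N q i
      - ((qc q)⁻¹ * Qc q) •
          ∑ k ∈ Finset.univ.filter (fun k => i < k), Z N q k * Zs N q k := by
  have h' := RingQuot.mkAlgHom_rel ℂ (SphereRel.qcomm (N := N) (q := q) i)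
  simp only [map_add, map_sub, map_smul, map_mul, map_sum, map_zero] at h'
  rw [sub_add_eq_add_sub, sub_eq_zero] at h'
  rw [eq_sub_iff_add_eq]
  exact h'

lemma Xzs' (hq0 : qc q ≠ 0) {i j : Fin N} (h : i ≠ j) :
    Zs N q j * Z N q i = (qc q)⁻¹ • (Z N q i * Zs N q j) := by
  rw [Xzs h, smul_smul, inv_mul_cancel₀ hq0, one_smul]

lemma Xss' (hq0 : qc q ≠ 0) {i j : Fin N} (h : i < j) :
    Zs N q j * Zs N q i = qc q • (Zs N q i * Zs N q j) := by
  rw [Xss h, smul_smul, mul_inv_cancel₀ hq0, one_smul]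

end AlgebraLemmas

end QSphere
namespace QSphere

section SumHelpers

variable {N : ℕ} {q : ℝ}

lemma negpow (i : Fin N) :
    qc q ^ (-(2 * exZ i)) = ((qc q)⁻¹) ^ (2 * (i : ℕ) + 2) := by
  have h : -(2 * exZ i) = -((2 * (i : ℕ) + 2 : ℕ) : ℤ) := by
    simp [exZ]; ring
  rw [h, zpow_neg, zpow_natCast, inv_pow]

lemma znegpow (n : ℕ) : qc q ^ (-(n : ℤ)) = ((qc q)⁻¹) ^ n := by
  rw [zpow_neg, zpow_natCast, inv_pow]

lemma pospow (i : Fin N) :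
    qc q ^ (2 * exZ i) = (qc q) ^ (2 * (i : ℕ) + 2) := by
  have h : 2 * exZ i = ((2 * (i : ℕ) + 2 : ℕ) : ℤ) := by
    simp [exZ]; ring
  rw [h, zpow_natCast]

lemma filter_nat_succ (m : Fin N) :
    (Finset.univ.filter (fun k : Fin N => m < k))
      = Finset.univ.filter (fun k : Fin N => (m : ℕ) + 1 ≤ (k : ℕ)) := by
  ext k
  simp only [Finset.mem_filter, Finset.mem_univ, true_and, Fin.lt_def]
  omega

lemma sum_tail {M : Type*} [AddCommMonoid M] (g : Fin N → M) (m : Fin N)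
    (hz : ∀ k, k < m → g k = 0) :
    ∑ k, g k = g m + ∑ k ∈ Finset.univ.filter (fun k : Fin N => m < k), g k := by
  have h1 : ∑ k, g k = ∑ k ∈ Finset.univ.filter (fun k : Fin N => m ≤ k), g k := by
    refine (Finset.sum_subset (Finset.filter_subset _ _) ?_).symm
    intro k _ hk
    simp only [Finset.mem_filter, Finset.mem_univ, true_and] at hk
    exact hz k (lt_of_not_ge hk)
  have h2 : Finset.univ.filter (fun k : Fin N => m ≤ k)
      = insert m (Finset.univ.filter (fun k : Fin N => m < k)) := by
    ext k
    simp only [Finset.mem_filter, Finset.mem_univ, true_and, Finset.mem_insert]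
    constructor
    · intro h
      rcases eq_or_lt_of_le h with h | h
      · exact Or.inl h.symm
      · exact Or.inr h
    · rintro (rfl | h)
      · exact le_refl _
      · exact le_of_lt h
  rw [h1, h2, Finset.sum_insert (by simp)]

lemma dsum_single {M : Type*} [AddCommMonoid M] (f : Fin N → Fin N → M)
    (k₁ a₁ : Fin N) (hz : ∀ k a, ¬(k = k₁ ∧ a = a₁) → f k a = 0) :
    ∑ k, ∑ a, f k a = f k₁ a₁ := by
  rw [Finset.sum_eq_single k₁]
  · rw [Finset.sum_eq_single a₁]
    · intro b _ hb
      exact hz _ _ (fun h => hb h.2)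
    · intro h
      exact absurd (Finset.mem_univ a₁) h
  · intro k _ hk
    exact Finset.sum_eq_zero fun a _ => hz _ _ (fun h => hk h.1)
  · intro h
    exact absurd (Finset.mem_univ k₁) h

lemma dsum_pair {M : Type*} [AddCommMonoid M] (f : Fin N → Fin N → M)
    (k₁ a₁ k₂ a₂ : Fin N) (hk : k₁ ≠ k₂)
    (hz : ∀ k a, ¬(k = k₁ ∧ a = a₁) → ¬(k = k₂ ∧ a = a₂) → f k a = 0) :
    ∑ k, ∑ a, f k a = f k₁ a₁ + f k₂ a₂ := by
  have h1 : ∀ k ∈ Finset.univ, k ∉ ({k₁, k₂} : Finset (Fin N)) → (∑ a, f k a) = 0 := by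
    intro k _ hk'
    simp only [Finset.mem_insert, Finset.mem_singleton, not_or] at hk'
    exact Finset.sum_eq_zero fun a _ => hz _ _ (fun h => hk'.1 h.1) (fun h => hk'.2 h.1)
  rw [← Finset.sum_subset (Finset.subset_univ {k₁, k₂}) h1,
    Finset.sum_insert (by simpa using hk), Finset.sum_singleton]
  congr 1
  · exact Finset.sum_eq_single a₁ (fun b _ hb => hz _ _ (fun h => hb h.2)
      (fun h => hk h.1)) (by simp)
  · exact Finset.sum_eq_single a₂ (fun b _ hb => hz _ _ (fun h => hk h.1.symm)
      (fun h => hb h.2)) (by simp)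

lemma dsum_diag {M : Type*} [AddCommMonoid M] (f : Fin N → Fin N → M)
    (hz : ∀ k a, a ≠ k → f k a = 0) :
    ∑ k, ∑ a, f k a = ∑ k, f k k :=
  Finset.sum_congr rfl fun k _ =>
    Finset.sum_eq_single k (fun b _ hb => hz k b hb) (by simp)

end SumHelpers

section Geo

variable {N : ℕ} {q : ℝ}

lemma hQu (hq0 : qc q ≠ 0) : (1 : ℂ) - (qc q)⁻¹ * Qc q = ((qc q)⁻¹) ^ 2 := by
  rw [Qc]
  field_simp
  ring

lemma geoA (hq0 : qc q ≠ 0) :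
    ∀ (n j : ℕ), N ≤ j + n →
      ∑ a ∈ Finset.univ.filter (fun a : Fin N => j ≤ (a : ℕ)),
          ((qc q)⁻¹ ^ (2 * (a : ℕ) + 2)) • (Zs N q a * Z N q a)
        = ((qc q)⁻¹ ^ (2 * j + 2)) •
            ∑ k ∈ Finset.univ.filter (fun k : Fin N => j ≤ (k : ℕ)), Z N q k * Zs N q k := by
  intro n
  induction n with
  | zero =>
    intro j hj
    have he : Finset.univ.filter (fun a : Fin N => j ≤ (a : ℕ)) = ∅ := by
      ext a
      simp only [Finset.mem_filter, Finset.mem_univ, true_and, Finset.notMem_empty, iff_false]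
      have := a.isLt
      omega
    rw [he]
    simp
  | succ n ih =>
    intro j hj
    by_cases hjN : N ≤ j
    · have he : Finset.univ.filter (fun a : Fin N => j ≤ (a : ℕ)) = ∅ := by
        ext a
        simp only [Finset.mem_filter, Finset.mem_univ, true_and, Finset.notMem_empty, iff_false]
        have := a.isLt
        omega
      rw [he]
      simp
    · push_neg at hjN
      have hsplit : Finset.univ.filter (fun a : Fin N => j ≤ (a : ℕ))
          = insert (⟨j, hjN⟩ : Fin N)
              (Finset.univ.filter (fun a : Fin N => j + 1 ≤ (a : ℕ))) := by
        ext a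
        simp only [Finset.mem_filter, Finset.mem_univ, true_and, Finset.mem_insert, Fin.ext_iff]
        omega
      have hnm : (⟨j, hjN⟩ : Fin N)
          ∉ Finset.univ.filter (fun a : Fin N => j + 1 ≤ (a : ℕ)) := by
        simp
      rw [hsplit, Finset.sum_insert hnm, Finset.sum_insert hnm, ih (j + 1) (by omega)]
      have hqc := Xqc (N := N) (q := q) ⟨j, hjN⟩
      rw [filter_nat_succ] at hqc
      simp only [Fin.val_mk] at hqc
      simp only [Fin.val_mk]
      rw [hqc]
      have hco : ((qc q)⁻¹ : ℂ) ^ (2 * (j + 1) + 2)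
          = (qc q)⁻¹ ^ (2 * j + 2) - (qc q)⁻¹ ^ (2 * j + 2) * ((qc q)⁻¹ * Qc q) := by
        have h2 : ((qc q)⁻¹ : ℂ) ^ (2 * (j + 1) + 2)
            = (qc q)⁻¹ ^ (2 * j + 2) * ((qc q)⁻¹) ^ 2 := by ring
        rw [h2, ← hQu hq0]
        ring
      rw [hco]
      module

lemma Xgeo (hq0 : qc q ≠ 0) :
    ∑ a : Fin N, ((qc q)⁻¹ ^ (2 * (a : ℕ) + 2)) • (Zs N q a * Z N q a)
      = (((qc q)⁻¹) ^ 2) • (1 : X N q) := by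
  have h := geoA (N := N) (q := q) hq0 N 0 (by omega)
  have hf : Finset.univ.filter (fun a : Fin N => 0 ≤ (a : ℕ)) = Finset.univ := by
    simp
  rw [hf] at h
  rw [Xsph] at h
  simpa using h

lemma Xgeo' (hq0 : qc q ≠ 0) (w : X N q) :
    ∑ k : Fin N, ((qc q)⁻¹ ^ (2 * (k : ℕ) + 2)) • (Zs N q k * (Z N q k * w))
      = (((qc q)⁻¹) ^ 2) • w := by
  calc ∑ k : Fin N, ((qc q)⁻¹ ^ (2 * (k : ℕ) + 2)) • (Zs N q k * (Z N q k * w))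
      = (∑ k : Fin N, ((qc q)⁻¹ ^ (2 * (k : ℕ) + 2)) • (Zs N q k * Z N q k)) * w := by
        rw [Finset.sum_mul]
        exact Finset.sum_congr rfl fun k _ => by rw [smul_mul_assoc, mul_assoc]
    _ = ((((qc q)⁻¹) ^ 2) • (1 : X N q)) * w := by rw [Xgeo hq0]
    _ = (((qc q)⁻¹) ^ 2) • w := by rw [smul_mul_assoc, one_mul]

lemma geoTail (hq0 : qc q ≠ 0) (m : Fin N) :
    ∑ k ∈ Finset.univ.filter (fun k : Fin N => m < k),
        ((qc q)⁻¹ ^ (2 * (k : ℕ) + 2)) • (Zs N q k * Z N q k)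
      = ((qc q)⁻¹ ^ (2 * (m : ℕ) + 4)) •
          ∑ k ∈ Finset.univ.filter (fun k : Fin N => m < k), Z N q k * Zs N q k := by
  have h := geoA (N := N) (q := q) hq0 N ((m : ℕ) + 1) (by have := m.isLt; omega)
  rw [← filter_nat_succ] at h
  have he : 2 * ((m : ℕ) + 1) + 2 = 2 * (m : ℕ) + 4 := by omega
  rw [h, he]

end Geo

end QSphere
namespace QSphere

section RSums

variable {N : ℕ} {q : ℝ}

/-- `Σ_{k,a} R^{ka}_{mb} z_k z_a = q z_m z_b`. -/
lemma L1 (hq0 : qc q ≠ 0) (m b : Fin N) :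
    ∑ k : Fin N, ∑ a : Fin N, Rm q k a m b • (Z N q k * Z N q a) = qc q • (Z N q m * Z N q b) := by
  have hQq : (1 : ℂ) + Qc q * qc q = qc q * qc q := by
    rw [Qc]
    field_simp
    ring
  rcases lt_trichotomy m b with h | rfl | h
  · have hbm : b ≠ m := ne_of_gt h
    calc ∑ k : Fin N, ∑ a : Fin N, Rm q k a m b • (Z N q k * Z N q a)
        = Rm q b m m b • (Z N q b * Z N q m) + Rm q m b m b • (Z N q m * Z N q b) := by
          refine dsum_pair _ b m m b hbm ?_
          intro k a h1 h2
          have hR : Rm q k a m b = 0 := by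
            rw [Rm, if_neg (fun hc => h1 ⟨hc.1, hc.2.1⟩),
              if_neg (fun hc => (ne_of_lt h) hc.2.2),
              if_neg (fun hc => h2 ⟨hc.1, hc.2.1⟩)]
          rw [hR, zero_smul]
      _ = qc q • (Z N q m * Z N q b) := by
          have e1 : Rm q b m m b = 1 := by
            rw [Rm, if_pos ⟨rfl, rfl, hbm⟩]
          have e2 : Rm q m b m b = Qc q := by
            rw [Rm, if_neg (fun hc => hbm hc.1.symm), if_neg (fun hc => hbm hc.1.symm),
              if_pos ⟨rfl, rfl, h⟩]
          rw [e1, e2, one_smul, Xzz h, smul_smul, smul_smul]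
          have hco : (Z N q b * Z N q m) + (Qc q * qc q) • (Z N q b * Z N q m)
              = ((1 : ℂ) + Qc q * qc q) • (Z N q b * Z N q m) := by
            rw [add_smul, one_smul]
          rw [hco, hQq]
  · calc ∑ k : Fin N, ∑ a : Fin N, Rm q k a m m • (Z N q k * Z N q a)
        = Rm q m m m m • (Z N q m * Z N q m) := by
          refine dsum_single _ m m ?_
          intro k a h1
          have hR : Rm q k a m m = 0 := by
            rw [Rm, if_neg (by rintro ⟨rfl, rfl, hne⟩; exact hne rfl),
              if_neg (by rintro ⟨rfl, rfl, -⟩; exact h1 ⟨rfl, rfl⟩),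
              if_neg (by rintro ⟨rfl, rfl, hlt⟩; exact lt_irrefl _ hlt)]
          rw [hR, zero_smul]
      _ = qc q • (Z N q m * Z N q m) := by
          have e : Rm q m m m m = qc q := by
            rw [Rm, if_neg (fun hc => hc.2.2 rfl), if_pos ⟨rfl, rfl, rfl⟩]
          rw [e]
  · calc ∑ k : Fin N, ∑ a : Fin N, Rm q k a m b • (Z N q k * Z N q a)
        = Rm q b m m b • (Z N q b * Z N q m) := by
          refine dsum_single _ b m ?_
          intro k a h1
          have hR : Rm q k a m b = 0 := by
            rw [Rm, if_neg (fun hc => h1 ⟨hc.1, hc.2.1⟩),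
              if_neg (by rintro ⟨rfl, rfl, rfl⟩; exact h1 ⟨rfl, rfl⟩),
              if_neg (by rintro ⟨rfl, rfl, hlt⟩; exact lt_asymm h hlt)]
          rw [hR, zero_smul]
      _ = qc q • (Z N q m * Z N q b) := by
          have e : Rm q b m m b = 1 := by
            rw [Rm, if_pos ⟨rfl, rfl, ne_of_lt h⟩]
          rw [e, one_smul, Xzz h]

/-- `Σ_{k,a} q^{-2k-2} (R⁻¹)^{ab}_{km} z*_k z_a = q^{-1} q^{-2b-2} z_m z*_b`. -/
lemma L2 (hq0 : qc q ≠ 0) (m b : Fin N) :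
    ∑ k : Fin N, ∑ a : Fin N, (((qc q)⁻¹ ^ (2 * (k : ℕ) + 2)) * Rinv q a b k m) • (Zs N q k * Z N q a)
      = ((qc q)⁻¹ * (qc q)⁻¹ ^ (2 * (b : ℕ) + 2)) • (Z N q m * Zs N q b) := by
  by_cases hbm : b = m
  · subst hbm
    calc ∑ k : Fin N, ∑ a : Fin N, (((qc q)⁻¹ ^ (2 * (k : ℕ) + 2)) * Rinv q a b k b) • (Zs N q k * Z N q a)
        = ∑ k : Fin N, (((qc q)⁻¹ ^ (2 * (k : ℕ) + 2)) * Rinv q k b k b) • (Zs N q k * Z N q k) := by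
          refine dsum_diag _ ?_
          intro k a hak
          have hR : Rinv q a b k b = 0 := by
            rw [Rinv, if_neg (by rintro ⟨rfl, rfl, hne⟩; exact hne rfl),
              if_neg (by rintro ⟨rfl, -, rfl⟩; exact hak rfl),
              if_neg (by rintro ⟨rfl, -, -⟩; exact hak rfl)]
          rw [hR, mul_zero, zero_smul]
      _ = (((qc q)⁻¹ ^ (2 * (b : ℕ) + 2)) * Rinv q b b b b) • (Zs N q b * Z N q b)
          + ∑ k ∈ Finset.univ.filter (fun k : Fin N => b < k),
              (((qc q)⁻¹ ^ (2 * (k : ℕ) + 2)) * Rinv q k b k b) • (Zs N q k * Z N q k) := by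
          refine sum_tail _ b ?_
          intro k hk
          have hR : Rinv q k b k b = 0 := by
            rw [Rinv, if_neg (by rintro ⟨rfl, -, hne⟩; exact hne rfl),
              if_neg (by rintro ⟨-, -, rfl⟩; exact (ne_of_gt hk) rfl),
              if_neg (by rintro ⟨-, -, hlt⟩; exact lt_asymm hk hlt)]
          rw [hR, mul_zero, zero_smul]
      _ = ((qc q)⁻¹ * (qc q)⁻¹ ^ (2 * (b : ℕ) + 2)) • (Z N q b * Zs N q b) := by
          have e0 : Rinv q b b b b = (qc q)⁻¹ := by
            rw [Rinv, if_neg (fun hc => hc.2.2 rfl), if_pos ⟨rfl, rfl, rfl⟩]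
          have etail : ∑ k ∈ Finset.univ.filter (fun k : Fin N => b < k),
              (((qc q)⁻¹ ^ (2 * (k : ℕ) + 2)) * Rinv q k b k b) • (Zs N q k * Z N q k)
              = (-(Qc q)) • (((qc q)⁻¹ ^ (2 * (b : ℕ) + 4)) •
                  ∑ k ∈ Finset.univ.filter (fun k : Fin N => b < k), Z N q k * Zs N q k) := by
            rw [← geoTail hq0 b, Finset.smul_sum]
            refine Finset.sum_congr rfl fun k hk => ?_
            have hbk : b < k := by
              simpa using hk
            have hR : Rinv q k b k b = -(Qc q) := by
              rw [Rinv, if_neg (by rintro ⟨rfl, -, hne⟩; exact hne rfl),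
                if_neg (by rintro ⟨-, -, rfl⟩; exact (ne_of_gt hbk) rfl),
                if_pos ⟨rfl, rfl, hbk⟩]
            rw [hR, mul_comm, mul_smul]
          rw [e0, etail, Xqc b]
          module
  · calc ∑ k : Fin N, ∑ a : Fin N, (((qc q)⁻¹ ^ (2 * (k : ℕ) + 2)) * Rinv q a b k m) • (Zs N q k * Z N q a)
        = (((qc q)⁻¹ ^ (2 * (b : ℕ) + 2)) * Rinv q m b b m) • (Zs N q b * Z N q m) := by
          refine dsum_single _ b m ?_
          intro k a h1
          have hR : Rinv q a b k m = 0 := by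
            rw [Rinv, if_neg (by rintro ⟨rfl, rfl, -⟩; exact h1 ⟨rfl, rfl⟩),
              if_neg (fun hc => hbm (hc.2.1.trans hc.2.2)),
              if_neg (fun hc => hbm hc.2.1)]
          rw [hR, mul_zero, zero_smul]
      _ = ((qc q)⁻¹ * (qc q)⁻¹ ^ (2 * (b : ℕ) + 2)) • (Z N q m * Zs N q b) := by
          have e : Rinv q m b b m = 1 := by
            rw [Rinv, if_pos ⟨rfl, rfl, fun e => hbm e.symm⟩]
          rw [e, mul_one, Xzs' hq0 (Ne.symm hbm), smul_smul,
            mul_comm ((qc q)⁻¹ ^ (2 * (b : ℕ) + 2)) ((qc q)⁻¹)]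

/-- `Σ_{k,a} R̄^{ab}_{km} z_k z*_a = q z*_m z_b`. -/
lemma L3 (hq0 : qc q ≠ 0) (m b : Fin N) :
    ∑ k : Fin N, ∑ a : Fin N, Rbar q a b k m • (Z N q k * Zs N q a) = qc q • (Zs N q m * Z N q b) := by
  simp only [Rbar]
  by_cases hbm : b = m
  · subst hbm
    calc ∑ k : Fin N, ∑ a : Fin N, Rm q b k b a • (Z N q k * Zs N q a)
        = ∑ k, Rm q b k b k • (Z N q k * Zs N q k) := by
          refine dsum_diag _ ?_
          intro k a hak
          have hR : Rm q b k b a = 0 := by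
            rw [Rm, if_neg (fun hc => hc.2.2 hc.2.1.symm),
              if_neg (fun hc => hak (hc.2.2.symm.trans hc.1)),
              if_neg (fun hc => hak hc.2.1.symm)]
          rw [hR, zero_smul]
      _ = Rm q b b b b • (Z N q b * Zs N q b)
          + ∑ k ∈ Finset.univ.filter (fun k : Fin N => b < k),
              Rm q b k b k • (Z N q k * Zs N q k) := by
          refine sum_tail _ b ?_
          intro k hk
          have hR : Rm q b k b k = 0 := by
            rw [Rm, if_neg (fun hc => hc.2.2 hc.1),
              if_neg (fun hc => (ne_of_gt hk) hc.1),
              if_neg (fun hc => lt_asymm hk hc.2.2)]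
          rw [hR, zero_smul]
      _ = qc q • (Zs N q b * Z N q b) := by
          have e0 : Rm q b b b b = qc q := by
            rw [Rm, if_neg (fun hc => hc.2.2 rfl), if_pos ⟨rfl, rfl, rfl⟩]
          have etail : ∑ k ∈ Finset.univ.filter (fun k : Fin N => b < k),
              Rm q b k b k • (Z N q k * Zs N q k)
              = Qc q • ∑ k ∈ Finset.univ.filter (fun k : Fin N => b < k),
                  Z N q k * Zs N q k := by
            rw [Finset.smul_sum]
            refine Finset.sum_congr rfl fun k hk => ?_
            have hbk : b < k := by
              simpa using hk
            have hR : Rm q b k b k = Qc q := by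
              rw [Rm, if_neg (fun hc => hc.2.2 hc.1),
                if_neg (fun hc => (ne_of_lt hbk) hc.1),
                if_pos ⟨rfl, rfl, hbk⟩]
            rw [hR]
          have hqQ : qc q * ((qc q)⁻¹ * Qc q) = Qc q := by
            rw [← mul_assoc, mul_inv_cancel₀ hq0, one_mul]
          rw [e0, etail, Xqc b, smul_sub, smul_smul, hqQ]
          abel
  · calc ∑ k : Fin N, ∑ a : Fin N, Rm q m k b a • (Z N q k * Zs N q a)
        = Rm q m b b m • (Z N q b * Zs N q m) := by
          refine dsum_single _ b m ?_
          intro k a h1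
          have hR : Rm q m k b a = 0 := by
            rw [Rm, if_neg (fun hc => h1 ⟨hc.2.1, hc.1.symm⟩),
              if_neg (fun hc => hbm (hc.1.trans hc.2.1).symm),
              if_neg (fun hc => hbm hc.1.symm)]
          rw [hR, zero_smul]
      _ = qc q • (Zs N q m * Z N q b) := by
          have e : Rm q m b b m = 1 := by
            rw [Rm, if_pos ⟨rfl, rfl, fun e => hbm e.symm⟩]
          rw [e, one_smul, Xzs hbm]

/-- `Σ_{k,a} q^{-2k-2} (R←⁻¹)^{ab}_{km} z*_k z*_a = q^{-1} q^{-2b-2} z*_m z*_b`. -/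
lemma L4 (hq0 : qc q ≠ 0) (m b : Fin N) :
    ∑ k : Fin N, ∑ a : Fin N, (((qc q)⁻¹ ^ (2 * (k : ℕ) + 2)) * Rlinv q a b k m) • (Zs N q k * Zs N q a)
      = ((qc q)⁻¹ * (qc q)⁻¹ ^ (2 * (b : ℕ) + 2)) • (Zs N q m * Zs N q b) := by
  simp only [Rlinv]
  rcases lt_trichotomy m b with h | rfl | h
  · have hbm : b ≠ m := ne_of_gt h
    have hmb : (m : ℕ) < (b : ℕ) := h
    calc ∑ k : Fin N, ∑ a : Fin N, (((qc q)⁻¹ ^ (2 * (k : ℕ) + 2))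
            * (qc q ^ (2 * exZ m - 2 * exZ a) * Rinv q b m a k)) • (Zs N q k * Zs N q a)
        = (((qc q)⁻¹ ^ (2 * (b : ℕ) + 2))
            * (qc q ^ (2 * exZ m - 2 * exZ m) * Rinv q b m m b)) • (Zs N q b * Zs N q m)
          + (((qc q)⁻¹ ^ (2 * (m : ℕ) + 2))
            * (qc q ^ (2 * exZ m - 2 * exZ b) * Rinv q b m b m)) • (Zs N q m * Zs N q b) := by
          refine dsum_pair _ b m m b hbm ?_
          intro k a h1 h2
          have hR : Rinv q b m a k = 0 := by
            rw [Rinv, if_neg (fun hc => h1 ⟨hc.1.symm, hc.2.1.symm⟩),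
              if_neg (fun hc => (ne_of_gt h) hc.1),
              if_neg (fun hc => h2 ⟨hc.2.1.symm, hc.1.symm⟩)]
          rw [hR, mul_zero, mul_zero, zero_smul]
      _ = ((qc q)⁻¹ * (qc q)⁻¹ ^ (2 * (b : ℕ) + 2)) • (Zs N q m * Zs N q b) := by
          have e1 : Rinv q b m m b = 1 := by
            rw [Rinv, if_pos ⟨rfl, rfl, hbm⟩]
          have e2 : Rinv q b m b m = -(Qc q) := by
            rw [Rinv, if_neg (fun hc => (ne_of_gt h) hc.1),
              if_neg (fun hc => (ne_of_gt h) hc.1),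
              if_pos ⟨rfl, rfl, h⟩]
          have hexp : 2 * exZ m - 2 * exZ b = -((2 * (b : ℕ) - 2 * (m : ℕ) : ℕ) : ℤ) := by
            simp only [exZ]
            omega
          have hd : ((qc q)⁻¹ : ℂ) ^ (2 * (m : ℕ) + 2)
              * ((qc q)⁻¹) ^ (2 * (b : ℕ) - 2 * (m : ℕ))
              = ((qc q)⁻¹) ^ (2 * (b : ℕ) + 2) := by
            rw [← pow_add]
            congr 1
            omega
          rw [e1, e2, sub_self, zpow_zero, one_mul, mul_one, hexp, znegpow,
            Xss h, smul_smul, smul_smul, ← add_smul]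
          congr 1
          linear_combination (-(Qc q) * (qc q)⁻¹) * hd
            + ((qc q)⁻¹ ^ (2 * (b : ℕ) + 2)) * (hQu hq0)
  · calc ∑ k : Fin N, ∑ a : Fin N, (((qc q)⁻¹ ^ (2 * (k : ℕ) + 2))
            * (qc q ^ (2 * exZ m - 2 * exZ a) * Rinv q m m a k)) • (Zs N q k * Zs N q a)
        = (((qc q)⁻¹ ^ (2 * (m : ℕ) + 2))
            * (qc q ^ (2 * exZ m - 2 * exZ m) * Rinv q m m m m)) • (Zs N q m * Zs N q m) := by
          refine dsum_single _ m m ?_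
          intro k a h1
          have hR : Rinv q m m a k = 0 := by
            rw [Rinv, if_neg (fun hc => hc.2.2 rfl),
              if_neg (fun hc => h1 ⟨hc.2.2.symm.trans hc.2.1.symm, hc.2.1.symm⟩),
              if_neg (fun hc => lt_irrefl _ hc.2.2)]
          rw [hR, mul_zero, mul_zero, zero_smul]
      _ = ((qc q)⁻¹ * (qc q)⁻¹ ^ (2 * (m : ℕ) + 2)) • (Zs N q m * Zs N q m) := by
          have e : Rinv q m m m m = (qc q)⁻¹ := by
            rw [Rinv, if_neg (fun hc => hc.2.2 rfl), if_pos ⟨rfl, rfl, rfl⟩]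
          rw [e, sub_self, zpow_zero, one_mul]
          congr 1
          ring
  · calc ∑ k : Fin N, ∑ a : Fin N, (((qc q)⁻¹ ^ (2 * (k : ℕ) + 2))
            * (qc q ^ (2 * exZ m - 2 * exZ a) * Rinv q b m a k)) • (Zs N q k * Zs N q a)
        = (((qc q)⁻¹ ^ (2 * (b : ℕ) + 2))
            * (qc q ^ (2 * exZ m - 2 * exZ m) * Rinv q b m m b)) • (Zs N q b * Zs N q m) := by
          refine dsum_single _ b m ?_
          intro k a h1
          have hR : Rinv q b m a k = 0 := by
            rw [Rinv, if_neg (fun hc => h1 ⟨hc.1.symm, hc.2.1.symm⟩),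
              if_neg (fun hc => (ne_of_lt h) hc.1),
              if_neg (fun hc => lt_asymm h hc.2.2)]
          rw [hR, mul_zero, mul_zero, zero_smul]
      _ = ((qc q)⁻¹ * (qc q)⁻¹ ^ (2 * (b : ℕ) + 2)) • (Zs N q m * Zs N q b) := by
          have e : Rinv q b m m b = 1 := by
            rw [Rinv, if_pos ⟨rfl, rfl, ne_of_lt h⟩]
          rw [e, sub_self, zpow_zero, one_mul, mul_one, Xss h, smul_smul]
          congr 1
          ring

end RSums

end QSphere
namespace QSphere

namespace PreCalc

variable {N : ℕ} {q : ℝ} {D : PreCalc N q}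

namespace IsFODC

theorem ladd (hD : D.IsFODC) : ∀ (x : X N q) (ω η : D.Γ),
    D.lact x (ω + η) = D.lact x ω + D.lact x η := hD.1

theorem laddx (hD : D.IsFODC) : ∀ (x y : X N q) (ω : D.Γ),
    D.lact (x + y) ω = D.lact x ω + D.lact y ω := hD.2.1

theorem lmul (hD : D.IsFODC) : ∀ (x y : X N q) (ω : D.Γ),
    D.lact (x * y) ω = D.lact x (D.lact y ω) := hD.2.2.1

theorem lone (hD : D.IsFODC) : ∀ ω : D.Γ, D.lact 1 ω = ω := hD.2.2.2.1

theorem lsmulx (hD : D.IsFODC) : ∀ (c : ℂ) (x : X N q) (ω : D.Γ),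
    D.lact (c • x) ω = c • D.lact x ω := hD.2.2.2.2.1

theorem lsmul (hD : D.IsFODC) : ∀ (c : ℂ) (x : X N q) (ω : D.Γ),
    D.lact x (c • ω) = c • D.lact x ω := hD.2.2.2.2.2.1

theorem radd (hD : D.IsFODC) : ∀ (ω η : D.Γ) (x : X N q),
    D.ract (ω + η) x = D.ract ω x + D.ract η x := hD.2.2.2.2.2.2.1

theorem rsmul (hD : D.IsFODC) : ∀ (c : ℂ) (ω : D.Γ) (x : X N q),
    D.ract (c • ω) x = c • D.ract ω x := hD.2.2.2.2.2.2.2.2.2.2.1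

theorem compat (hD : D.IsFODC) : ∀ (x : X N q) (ω : D.Γ) (y : X N q),
    D.ract (D.lact x ω) y = D.lact x (D.ract ω y) := hD.2.2.2.2.2.2.2.2.2.2.2.2.1

theorem lsub (hD : D.IsFODC) (x : X N q) (α β : D.Γ) :
    D.lact x (α - β) = D.lact x α - D.lact x β :=
  map_sub (AddMonoidHom.mk' (D.lact x) (hD.ladd x)) α β

theorem lsum (hD : D.IsFODC) (x : X N q) {ι : Type} (s : Finset ι) (f : ι → D.Γ) :
    D.lact x (∑ i ∈ s, f i) = ∑ i ∈ s, D.lact x (f i) :=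
  map_sum (AddMonoidHom.mk' (D.lact x) (hD.ladd x)) f s

theorem lsumx (hD : D.IsFODC) (ω : D.Γ) {ι : Type} (s : Finset ι) (f : ι → X N q) :
    D.lact (∑ i ∈ s, f i) ω = ∑ i ∈ s, D.lact (f i) ω :=
  map_sum (AddMonoidHom.mk' (fun x => D.lact x ω) (fun a b => hD.laddx a b ω)) f s

theorem rsum (hD : D.IsFODC) (x : X N q) {ι : Type} (s : Finset ι) (f : ι → D.Γ) :
    D.ract (∑ i ∈ s, f i) x = ∑ i ∈ s, D.ract (f i) x :=
  map_sum (AddMonoidHom.mk' (fun ω => D.ract ω x) (fun a b => hD.radd a b x)) f s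

end IsFODC

/-- `θ₋` with natural-number powers. -/
lemma thM_eq : D.thM = ∑ k : Fin N, ((qc q)⁻¹ ^ (2 * (k : ℕ) + 2)) • D.lact (Zs N q k) (D.dz k) := by
  simp only [thM]
  exact Finset.sum_congr rfl fun k _ => by rw [negpow]

/-- `Σ_k z_k z*_k w = w` in `X`, as needed below. -/
lemma XsumZZs (w : X N q) : ∑ k : Fin N, Z N q k * (Zs N q k * w) = w := by
  calc ∑ k : Fin N, Z N q k * (Zs N q k * w)
      = (∑ k : Fin N, Z N q k * Zs N q k) * w := by
        rw [Finset.sum_mul]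
        exact Finset.sum_congr rfl fun k _ => (mul_assoc _ _ _).symm
    _ = w := by rw [Xsph, one_mul]

lemma thP_z {ρ τ : ℝ} (hD : D.IsFODC) (hEq : D.EqPPP ρ τ) (hq0 : qc q ≠ 0) (m : Fin N) :
    D.ract D.thP (Z N q m) =
      (sP N q * (ρ:ℂ) - qc q ^ (2 * (N:ℤ) - 2) * (ρ:ℂ)) • D.lact (Z N q m) D.thP
      + (qc q ^ 2 * (sP N q * (τ:ℂ) - 1) - qc q ^ (2 * (N:ℤ)) * (τ:ℂ)) •
          D.lact (Z N q m) D.thM := by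
  have key : ∀ k : Fin N, D.lact (Z N q k) (D.ract (D.dzs k) (Z N q m)) =
      (qc q)⁻¹ • D.lact (Z N q k) (D.SRright k m)
      - (qc q ^ (2 * (N:ℤ) - 2) * (ρ:ℂ) * kdelta k m) • D.lact (Z N q k) D.thP
      - (qc q ^ (2 * (N:ℤ)) * (τ:ℂ) * kdelta k m) • D.lact (Z N q k) D.thM
      + (sP N q * (ρ:ℂ) - 1) • D.lact (Z N q k) (D.zszP k m)
      + (qc q ^ 2 * (sP N q * (τ:ℂ) - 1)) • D.lact (Z N q k) (D.zszM k m) := by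
    intro k
    rw [(hEq k m).2.2.2]
    simp only [hD.ladd, hD.lsub, hD.lsmul]
  have expand : D.ract D.thP (Z N q m)
      = ∑ k, D.lact (Z N q k) (D.ract (D.dzs k) (Z N q m)) := by
    simp only [thP]
    rw [hD.rsum]
    exact Finset.sum_congr rfl fun k _ => hD.compat _ _ _
  have T1 : (∑ k : Fin N, (qc q)⁻¹ • D.lact (Z N q k) (D.SRright k m))
      = D.lact (Z N q m) D.thP := by
    have e1 : ∀ k : Fin N, D.lact (Z N q k) (D.SRright k m)
        = ∑ a : Fin N, ∑ b : Fin N, Rm q k a m b • D.lact (Z N q k * Z N q a) (D.dzs b) := by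
      intro k
      simp only [SRright, Rright]
      rw [hD.lsum]
      refine Finset.sum_congr rfl fun a _ => ?_
      rw [hD.lsum]
      refine Finset.sum_congr rfl fun b _ => ?_
      rw [hD.lsmul, hD.lmul]
    calc ∑ k : Fin N, (qc q)⁻¹ • D.lact (Z N q k) (D.SRright k m)
        = (qc q)⁻¹ • ∑ k : Fin N, ∑ a : Fin N, ∑ b : Fin N,
            Rm q k a m b • D.lact (Z N q k * Z N q a) (D.dzs b) := by
          rw [← Finset.smul_sum]
          exact congrArg _ (Finset.sum_congr rfl fun k _ => e1 k)
      _ = (qc q)⁻¹ • ∑ b : Fin N, ∑ k : Fin N, ∑ a : Fin N,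
            Rm q k a m b • D.lact (Z N q k * Z N q a) (D.dzs b) := by
          congr 1
          exact (Finset.sum_congr rfl fun k _ => Finset.sum_comm).trans Finset.sum_comm
      _ = (qc q)⁻¹ • ∑ b : Fin N, qc q • D.lact (Z N q m) (D.lact (Z N q b) (D.dzs b)) := by
          congr 1
          refine Finset.sum_congr rfl fun b _ => ?_
          have e2 : ∑ k : Fin N, ∑ a : Fin N, Rm q k a m b • D.lact (Z N q k * Z N q a) (D.dzs b)
              = D.lact (∑ k : Fin N, ∑ a : Fin N, Rm q k a m b • (Z N q k * Z N q a)) (D.dzs b) := by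
            rw [hD.lsumx]
            refine Finset.sum_congr rfl fun k _ => ?_
            rw [hD.lsumx]
            exact Finset.sum_congr rfl fun a _ => (hD.lsmulx _ _ _).symm
          rw [e2, L1 hq0 m b, hD.lsmulx, hD.lmul]
      _ = D.lact (Z N q m) D.thP := by
          rw [← Finset.smul_sum, ← hD.lsum, smul_smul, inv_mul_cancel₀ hq0, one_smul]
          simp only [thP]
  have T2 : ∑ k : Fin N, (qc q ^ (2 * (N:ℤ) - 2) * (ρ:ℂ) * kdelta k m) • D.lact (Z N q k) D.thP
      = (qc q ^ (2 * (N:ℤ) - 2) * (ρ:ℂ)) • D.lact (Z N q m) D.thP := by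
    rw [Finset.sum_eq_single m]
    · rw [kdelta, if_pos rfl, mul_one]
    · intro k _ hk
      rw [kdelta, if_neg hk, mul_zero, zero_smul]
    · intro h
      exact absurd (Finset.mem_univ m) h
  have T3 : ∑ k : Fin N, (qc q ^ (2 * (N:ℤ)) * (τ:ℂ) * kdelta k m) • D.lact (Z N q k) D.thM
      = (qc q ^ (2 * (N:ℤ)) * (τ:ℂ)) • D.lact (Z N q m) D.thM := by
    rw [Finset.sum_eq_single m]
    · rw [kdelta, if_pos rfl, mul_one]
    · intro k _ hk
      rw [kdelta, if_neg hk, mul_zero, zero_smul]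
    · intro h
      exact absurd (Finset.mem_univ m) h
  have T4 : ∑ k : Fin N, (sP N q * (ρ:ℂ) - 1) • D.lact (Z N q k) (D.zszP k m)
      = (sP N q * (ρ:ℂ) - 1) • D.lact (Z N q m) D.thP := by
    rw [← Finset.smul_sum]
    congr 1
    calc ∑ k : Fin N, D.lact (Z N q k) (D.zszP k m)
        = ∑ k : Fin N, D.lact (Z N q k * (Zs N q k * Z N q m)) D.thP := by
          exact Finset.sum_congr rfl fun k _ => by
            simp only [zszP]
            rw [← hD.lmul]
      _ = D.lact (∑ k : Fin N, Z N q k * (Zs N q k * Z N q m)) D.thP := (hD.lsumx _ _ _).symm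
      _ = D.lact (Z N q m) D.thP := by rw [XsumZZs]
  have T5 : ∑ k : Fin N, (qc q ^ 2 * (sP N q * (τ:ℂ) - 1)) • D.lact (Z N q k) (D.zszM k m)
      = (qc q ^ 2 * (sP N q * (τ:ℂ) - 1)) • D.lact (Z N q m) D.thM := by
    rw [← Finset.smul_sum]
    congr 1
    calc ∑ k : Fin N, D.lact (Z N q k) (D.zszM k m)
        = ∑ k : Fin N, D.lact (Z N q k * (Zs N q k * Z N q m)) D.thM := by
          exact Finset.sum_congr rfl fun k _ => by
            simp only [zszM]
            rw [← hD.lmul]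
      _ = D.lact (∑ k : Fin N, Z N q k * (Zs N q k * Z N q m)) D.thM := (hD.lsumx _ _ _).symm
      _ = D.lact (Z N q m) D.thM := by rw [XsumZZs]
  rw [expand]
  simp only [key]
  rw [Finset.sum_add_distrib, Finset.sum_add_distrib, Finset.sum_sub_distrib,
    Finset.sum_sub_distrib, T1, T2, T3, T4, T5]
  module

lemma thM_z {ρ τ : ℝ} (hD : D.IsFODC) (hEq : D.EqPPP ρ τ) (hq0 : qc q ≠ 0) (m : Fin N) :
    D.ract D.thM (Z N q m) =
      (-(qc q ^ (-2:ℤ) * ((ρ:ℂ)/(τ:ℂ)) * (sT N q * (ρ:ℂ) - 1) * ((qc q)⁻¹) ^ 2)) •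
          D.lact (Z N q m) D.thP
      + (((qc q)⁻¹) ^ 2
          - ((ρ:ℂ)/(τ:ℂ)) * (sT N q * (τ:ℂ) - qc q ^ 2) * ((qc q)⁻¹) ^ 2) •
          D.lact (Z N q m) D.thM := by
  have key : ∀ k : Fin N, D.lact (Zs N q k) (D.ract (D.dz k) (Z N q m)) =
      (qc q)⁻¹ • D.lact (Zs N q k) (D.SRinv k m)
      - (qc q ^ (-2:ℤ) * ((ρ:ℂ)/(τ:ℂ)) * (sT N q * (ρ:ℂ) - 1)) • D.lact (Zs N q k) (D.zzP k m)
      - (((ρ:ℂ)/(τ:ℂ)) * (sT N q * (τ:ℂ) - qc q ^ 2)) • D.lact (Zs N q k) (D.zzM k m) := by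
    intro k
    rw [(hEq k m).1]
    simp only [hD.lsub, hD.lsmul]
  have expand : D.ract D.thM (Z N q m)
      = ∑ k : Fin N, ((qc q)⁻¹ ^ (2 * (k : ℕ) + 2)) •
          D.lact (Zs N q k) (D.ract (D.dz k) (Z N q m)) := by
    rw [thM_eq, hD.rsum]
    exact Finset.sum_congr rfl fun k _ => by rw [hD.rsmul, hD.compat]
  have U1 : ∑ k : Fin N, ((qc q)⁻¹ ^ (2 * (k : ℕ) + 2)) •
        ((qc q)⁻¹ • D.lact (Zs N q k) (D.SRinv k m))
      = (((qc q)⁻¹) ^ 2) • D.lact (Z N q m) D.thM := by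
    have e2 : ∀ k : Fin N, ((qc q)⁻¹ ^ (2 * (k : ℕ) + 2)) • D.lact (Zs N q k) (D.SRinv k m)
        = ∑ a : Fin N, ∑ b : Fin N,
            (((qc q)⁻¹ ^ (2 * (k : ℕ) + 2)) * Rinv q a b k m) •
              D.lact (Zs N q k * Z N q a) (D.dz b) := by
      intro k
      simp only [SRinv]
      rw [hD.lsum, Finset.smul_sum]
      refine Finset.sum_congr rfl fun a _ => ?_
      rw [hD.lsum, Finset.smul_sum]
      refine Finset.sum_congr rfl fun b _ => ?_
      rw [hD.lsmul, ← hD.lmul, smul_smul]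
    have swap : ∀ k : Fin N, ((qc q)⁻¹ ^ (2 * (k : ℕ) + 2)) •
          ((qc q)⁻¹ • D.lact (Zs N q k) (D.SRinv k m))
        = (qc q)⁻¹ • (((qc q)⁻¹ ^ (2 * (k : ℕ) + 2)) • D.lact (Zs N q k) (D.SRinv k m)) :=
      fun k => smul_comm _ _ _
    calc ∑ k : Fin N, ((qc q)⁻¹ ^ (2 * (k : ℕ) + 2)) •
          ((qc q)⁻¹ • D.lact (Zs N q k) (D.SRinv k m))
        = (qc q)⁻¹ • ∑ k : Fin N, ((qc q)⁻¹ ^ (2 * (k : ℕ) + 2)) •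
            D.lact (Zs N q k) (D.SRinv k m) := by
          simp only [swap]
          rw [← Finset.smul_sum]
      _ = (qc q)⁻¹ • ∑ k : Fin N, ∑ a : Fin N, ∑ b : Fin N,
            (((qc q)⁻¹ ^ (2 * (k : ℕ) + 2)) * Rinv q a b k m) •
              D.lact (Zs N q k * Z N q a) (D.dz b) := by
          congr 1
          exact Finset.sum_congr rfl fun k _ => e2 k
      _ = (qc q)⁻¹ • ∑ b : Fin N, ∑ k : Fin N, ∑ a : Fin N,
            (((qc q)⁻¹ ^ (2 * (k : ℕ) + 2)) * Rinv q a b k m) •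
              D.lact (Zs N q k * Z N q a) (D.dz b) := by
          congr 1
          exact (Finset.sum_congr rfl fun k _ => Finset.sum_comm).trans Finset.sum_comm
      _ = (qc q)⁻¹ • ∑ b : Fin N, ((qc q)⁻¹ * (qc q)⁻¹ ^ (2 * (b : ℕ) + 2)) •
            D.lact (Z N q m) (D.lact (Zs N q b) (D.dz b)) := by
          congr 1
          refine Finset.sum_congr rfl fun b _ => ?_
          have e3 : ∑ k : Fin N, ∑ a : Fin N,
              (((qc q)⁻¹ ^ (2 * (k : ℕ) + 2)) * Rinv q a b k m) •
                D.lact (Zs N q k * Z N q a) (D.dz b)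
              = D.lact (∑ k : Fin N, ∑ a : Fin N,
                  (((qc q)⁻¹ ^ (2 * (k : ℕ) + 2)) * Rinv q a b k m) •
                    (Zs N q k * Z N q a)) (D.dz b) := by
            rw [hD.lsumx]
            refine Finset.sum_congr rfl fun k _ => ?_
            rw [hD.lsumx]
            exact Finset.sum_congr rfl fun a _ => (hD.lsmulx _ _ _).symm
          rw [e3, L2 hq0 m b, hD.lsmulx, hD.lmul]
      _ = (((qc q)⁻¹) ^ 2) • D.lact (Z N q m) D.thM := by
          have e4 : ∀ b : Fin N, ((qc q)⁻¹ * (qc q)⁻¹ ^ (2 * (b : ℕ) + 2)) •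
                D.lact (Z N q m) (D.lact (Zs N q b) (D.dz b))
              = (qc q)⁻¹ • D.lact (Z N q m)
                  (((qc q)⁻¹ ^ (2 * (b : ℕ) + 2)) • D.lact (Zs N q b) (D.dz b)) :=
            fun b => by rw [mul_smul, hD.lsmul]
          simp only [e4]
          rw [← Finset.smul_sum, ← hD.lsum, ← thM_eq, smul_smul]
          congr 1
          ring
  have U2 : ∑ k : Fin N, ((qc q)⁻¹ ^ (2 * (k : ℕ) + 2)) •
        ((qc q ^ (-2:ℤ) * ((ρ:ℂ)/(τ:ℂ)) * (sT N q * (ρ:ℂ) - 1)) •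
          D.lact (Zs N q k) (D.zzP k m))
      = ((qc q ^ (-2:ℤ) * ((ρ:ℂ)/(τ:ℂ)) * (sT N q * (ρ:ℂ) - 1)) * ((qc q)⁻¹) ^ 2) •
          D.lact (Z N q m) D.thP := by
    have e5 : ∀ k : Fin N, ((qc q)⁻¹ ^ (2 * (k : ℕ) + 2)) •
          ((qc q ^ (-2:ℤ) * ((ρ:ℂ)/(τ:ℂ)) * (sT N q * (ρ:ℂ) - 1)) •
            D.lact (Zs N q k) (D.zzP k m))
        = (qc q ^ (-2:ℤ) * ((ρ:ℂ)/(τ:ℂ)) * (sT N q * (ρ:ℂ) - 1)) •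
            D.lact (((qc q)⁻¹ ^ (2 * (k : ℕ) + 2)) • (Zs N q k * (Z N q k * Z N q m))) D.thP := by
      intro k
      rw [smul_comm]
      congr 1
      simp only [zzP]
      rw [← hD.lmul, hD.lsmulx]
    simp only [e5]
    rw [← Finset.smul_sum, ← hD.lsumx, Xgeo' hq0, hD.lsmulx, smul_smul]
  have U3 : ∑ k : Fin N, ((qc q)⁻¹ ^ (2 * (k : ℕ) + 2)) •
        (((((ρ:ℂ)/(τ:ℂ)) * (sT N q * (τ:ℂ) - qc q ^ 2))) •
          D.lact (Zs N q k) (D.zzM k m))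
      = (((ρ:ℂ)/(τ:ℂ)) * (sT N q * (τ:ℂ) - qc q ^ 2) * ((qc q)⁻¹) ^ 2) •
          D.lact (Z N q m) D.thM := by
    have e5 : ∀ k : Fin N, ((qc q)⁻¹ ^ (2 * (k : ℕ) + 2)) •
          ((((ρ:ℂ)/(τ:ℂ)) * (sT N q * (τ:ℂ) - qc q ^ 2)) •
            D.lact (Zs N q k) (D.zzM k m))
        = (((ρ:ℂ)/(τ:ℂ)) * (sT N q * (τ:ℂ) - qc q ^ 2)) •
            D.lact (((qc q)⁻¹ ^ (2 * (k : ℕ) + 2)) • (Zs N q k * (Z N q k * Z N q m))) D.thM := by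
      intro k
      rw [smul_comm]
      congr 1
      simp only [zzM]
      rw [← hD.lmul, hD.lsmulx]
    simp only [e5]
    rw [← Finset.smul_sum, ← hD.lsumx, Xgeo' hq0, hD.lsmulx, smul_smul]
  rw [expand]
  simp only [key, smul_sub]
  rw [Finset.sum_sub_distrib, Finset.sum_sub_distrib, U1, U2, U3]
  module

lemma thP_zs {ρ τ : ℝ} (hD : D.IsFODC) (hEq : D.EqPPP ρ τ) (hq0 : qc q ≠ 0) (m : Fin N) :
    D.ract D.thP (Zs N q m) =
      (qc q * qc q - ((τ:ℂ)/(ρ:ℂ)) * (sT N q * (ρ:ℂ) - 1)) • D.lact (Zs N q m) D.thP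
      + (-(qc q ^ 2 * ((τ:ℂ)/(ρ:ℂ)) * (sT N q * (τ:ℂ) - qc q ^ 2))) •
          D.lact (Zs N q m) D.thM := by
  have key : ∀ k : Fin N, D.lact (Z N q k) (D.ract (D.dzs k) (Zs N q m)) =
      qc q • D.lact (Z N q k) (D.SRbar k m)
      - (((τ:ℂ)/(ρ:ℂ)) * (sT N q * (ρ:ℂ) - 1)) • D.lact (Z N q k) (D.zszsP k m)
      - (qc q ^ 2 * ((τ:ℂ)/(ρ:ℂ)) * (sT N q * (τ:ℂ) - qc q ^ 2)) •
          D.lact (Z N q k) (D.zszsM k m) := by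
    intro k
    rw [(hEq k m).2.1]
    simp only [hD.lsub, hD.lsmul]
  have expand : D.ract D.thP (Zs N q m)
      = ∑ k : Fin N, D.lact (Z N q k) (D.ract (D.dzs k) (Zs N q m)) := by
    simp only [thP]
    rw [hD.rsum]
    exact Finset.sum_congr rfl fun k _ => hD.compat _ _ _
  have T1 : (∑ k : Fin N, qc q • D.lact (Z N q k) (D.SRbar k m))
      = (qc q * qc q) • D.lact (Zs N q m) D.thP := by
    have e1 : ∀ k : Fin N, D.lact (Z N q k) (D.SRbar k m)
        = ∑ a : Fin N, ∑ b : Fin N, Rbar q a b k m • D.lact (Z N q k * Zs N q a) (D.dzs b) := by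
      intro k
      simp only [SRbar]
      rw [hD.lsum]
      refine Finset.sum_congr rfl fun a _ => ?_
      rw [hD.lsum]
      refine Finset.sum_congr rfl fun b _ => ?_
      rw [hD.lsmul, ← hD.lmul]
    calc ∑ k : Fin N, qc q • D.lact (Z N q k) (D.SRbar k m)
        = qc q • ∑ k : Fin N, ∑ a : Fin N, ∑ b : Fin N,
            Rbar q a b k m • D.lact (Z N q k * Zs N q a) (D.dzs b) := by
          rw [← Finset.smul_sum]
          exact congrArg _ (Finset.sum_congr rfl fun k _ => e1 k)
      _ = qc q • ∑ b : Fin N, ∑ k : Fin N, ∑ a : Fin N,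
            Rbar q a b k m • D.lact (Z N q k * Zs N q a) (D.dzs b) := by
          congr 1
          exact (Finset.sum_congr rfl fun k _ => Finset.sum_comm).trans Finset.sum_comm
      _ = qc q • ∑ b : Fin N, qc q • D.lact (Zs N q m) (D.lact (Z N q b) (D.dzs b)) := by
          congr 1
          refine Finset.sum_congr rfl fun b _ => ?_
          have e2 : ∑ k : Fin N, ∑ a : Fin N, Rbar q a b k m • D.lact (Z N q k * Zs N q a) (D.dzs b)
              = D.lact (∑ k : Fin N, ∑ a : Fin N, Rbar q a b k m • (Z N q k * Zs N q a)) (D.dzs b) := by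
            rw [hD.lsumx]
            refine Finset.sum_congr rfl fun k _ => ?_
            rw [hD.lsumx]
            exact Finset.sum_congr rfl fun a _ => (hD.lsmulx _ _ _).symm
          rw [e2, L3 hq0 m b, hD.lsmulx, hD.lmul]
      _ = (qc q * qc q) • D.lact (Zs N q m) D.thP := by
          rw [← Finset.smul_sum, ← hD.lsum, smul_smul]
          simp only [thP]
  have T2 : ∑ k : Fin N, (((τ:ℂ)/(ρ:ℂ)) * (sT N q * (ρ:ℂ) - 1)) •
        D.lact (Z N q k) (D.zszsP k m)
      = (((τ:ℂ)/(ρ:ℂ)) * (sT N q * (ρ:ℂ) - 1)) • D.lact (Zs N q m) D.thP := by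
    rw [← Finset.smul_sum]
    congr 1
    calc ∑ k : Fin N, D.lact (Z N q k) (D.zszsP k m)
        = ∑ k : Fin N, D.lact (Z N q k * (Zs N q k * Zs N q m)) D.thP := by
          exact Finset.sum_congr rfl fun k _ => by
            simp only [zszsP]
            rw [← hD.lmul]
      _ = D.lact (∑ k : Fin N, Z N q k * (Zs N q k * Zs N q m)) D.thP := (hD.lsumx _ _ _).symm
      _ = D.lact (Zs N q m) D.thP := by rw [XsumZZs]
  have T3 : ∑ k : Fin N, (qc q ^ 2 * ((τ:ℂ)/(ρ:ℂ)) * (sT N q * (τ:ℂ) - qc q ^ 2)) •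
        D.lact (Z N q k) (D.zszsM k m)
      = (qc q ^ 2 * ((τ:ℂ)/(ρ:ℂ)) * (sT N q * (τ:ℂ) - qc q ^ 2)) •
          D.lact (Zs N q m) D.thM := by
    rw [← Finset.smul_sum]
    congr 1
    calc ∑ k : Fin N, D.lact (Z N q k) (D.zszsM k m)
        = ∑ k : Fin N, D.lact (Z N q k * (Zs N q k * Zs N q m)) D.thM := by
          exact Finset.sum_congr rfl fun k _ => by
            simp only [zszsM]
            rw [← hD.lmul]
      _ = D.lact (∑ k : Fin N, Z N q k * (Zs N q k * Zs N q m)) D.thM := (hD.lsumx _ _ _).symm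
      _ = D.lact (Zs N q m) D.thM := by rw [XsumZZs]
  rw [expand]
  simp only [key]
  rw [Finset.sum_sub_distrib, Finset.sum_sub_distrib, T1, T2, T3]
  module

lemma thM_zs {ρ τ : ℝ} (hD : D.IsFODC) (hEq : D.EqPPP ρ τ) (hq0 : qc q ≠ 0) (m : Fin N) :
    D.ract D.thM (Zs N q m) =
      ((sP N q * (ρ:ℂ) - 1) * ((qc q)⁻¹) ^ 2 - qc q ^ (-2:ℤ) * (ρ:ℂ)) •
          D.lact (Zs N q m) D.thP
      + ((1 : ℂ) - (τ:ℂ) + qc q ^ 2 * (sP N q * (τ:ℂ) - 1) * ((qc q)⁻¹) ^ 2) •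
          D.lact (Zs N q m) D.thM := by
  have key : ∀ k : Fin N, D.lact (Zs N q k) (D.ract (D.dz k) (Zs N q m)) =
      qc q • D.lact (Zs N q k) (D.SRlinv k m)
      - (qc q ^ (-2:ℤ) * (ρ:ℂ) * qc q ^ (2 * exZ k) * kdelta k m) • D.lact (Zs N q k) D.thP
      - ((τ:ℂ) * qc q ^ (2 * exZ k) * kdelta k m) • D.lact (Zs N q k) D.thM
      + (sP N q * (ρ:ℂ) - 1) • D.lact (Zs N q k) (D.zzsP k m)
      + (qc q ^ 2 * (sP N q * (τ:ℂ) - 1)) • D.lact (Zs N q k) (D.zzsM k m) := by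
    intro k
    rw [(hEq k m).2.2.1]
    simp only [hD.ladd, hD.lsub, hD.lsmul]
  have expand : D.ract D.thM (Zs N q m)
      = ∑ k : Fin N, ((qc q)⁻¹ ^ (2 * (k : ℕ) + 2)) •
          D.lact (Zs N q k) (D.ract (D.dz k) (Zs N q m)) := by
    rw [thM_eq, hD.rsum]
    exact Finset.sum_congr rfl fun k _ => by rw [hD.rsmul, hD.compat]
  have V1 : ∑ k : Fin N, ((qc q)⁻¹ ^ (2 * (k : ℕ) + 2)) •
        (qc q • D.lact (Zs N q k) (D.SRlinv k m))
      = D.lact (Zs N q m) D.thM := by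
    have e2 : ∀ k : Fin N, ((qc q)⁻¹ ^ (2 * (k : ℕ) + 2)) • D.lact (Zs N q k) (D.SRlinv k m)
        = ∑ a : Fin N, ∑ b : Fin N,
            (((qc q)⁻¹ ^ (2 * (k : ℕ) + 2)) * Rlinv q a b k m) •
              D.lact (Zs N q k * Zs N q a) (D.dz b) := by
      intro k
      simp only [SRlinv]
      rw [hD.lsum, Finset.smul_sum]
      refine Finset.sum_congr rfl fun a _ => ?_
      rw [hD.lsum, Finset.smul_sum]
      refine Finset.sum_congr rfl fun b _ => ?_
      rw [hD.lsmul, ← hD.lmul, smul_smul]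
    have swap : ∀ k : Fin N, ((qc q)⁻¹ ^ (2 * (k : ℕ) + 2)) •
          (qc q • D.lact (Zs N q k) (D.SRlinv k m))
        = qc q • (((qc q)⁻¹ ^ (2 * (k : ℕ) + 2)) • D.lact (Zs N q k) (D.SRlinv k m)) :=
      fun k => smul_comm _ _ _
    calc ∑ k : Fin N, ((qc q)⁻¹ ^ (2 * (k : ℕ) + 2)) •
          (qc q • D.lact (Zs N q k) (D.SRlinv k m))
        = qc q • ∑ k : Fin N, ∑ a : Fin N, ∑ b : Fin N,
            (((qc q)⁻¹ ^ (2 * (k : ℕ) + 2)) * Rlinv q a b k m) •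
              D.lact (Zs N q k * Zs N q a) (D.dz b) := by
          simp only [swap]
          rw [← Finset.smul_sum]
          congr 1
          exact Finset.sum_congr rfl fun k _ => e2 k
      _ = qc q • ∑ b : Fin N, ∑ k : Fin N, ∑ a : Fin N,
            (((qc q)⁻¹ ^ (2 * (k : ℕ) + 2)) * Rlinv q a b k m) •
              D.lact (Zs N q k * Zs N q a) (D.dz b) := by
          congr 1
          exact (Finset.sum_congr rfl fun k _ => Finset.sum_comm).trans Finset.sum_comm
      _ = qc q • ∑ b : Fin N, ((qc q)⁻¹ * (qc q)⁻¹ ^ (2 * (b : ℕ) + 2)) •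
            D.lact (Zs N q m) (D.lact (Zs N q b) (D.dz b)) := by
          congr 1
          refine Finset.sum_congr rfl fun b _ => ?_
          have e3 : ∑ k : Fin N, ∑ a : Fin N,
              (((qc q)⁻¹ ^ (2 * (k : ℕ) + 2)) * Rlinv q a b k m) •
                D.lact (Zs N q k * Zs N q a) (D.dz b)
              = D.lact (∑ k : Fin N, ∑ a : Fin N,
                  (((qc q)⁻¹ ^ (2 * (k : ℕ) + 2)) * Rlinv q a b k m) •
                    (Zs N q k * Zs N q a)) (D.dz b) := by
            rw [hD.lsumx]
            refine Finset.sum_congr rfl fun k _ => ?_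
            rw [hD.lsumx]
            exact Finset.sum_congr rfl fun a _ => (hD.lsmulx _ _ _).symm
          rw [e3, L4 hq0 m b, hD.lsmulx, hD.lmul]
      _ = D.lact (Zs N q m) D.thM := by
          have e4 : ∀ b : Fin N, ((qc q)⁻¹ * (qc q)⁻¹ ^ (2 * (b : ℕ) + 2)) •
                D.lact (Zs N q m) (D.lact (Zs N q b) (D.dz b))
              = (qc q)⁻¹ • D.lact (Zs N q m)
                  (((qc q)⁻¹ ^ (2 * (b : ℕ) + 2)) • D.lact (Zs N q b) (D.dz b)) :=
            fun b => by rw [mul_smul, hD.lsmul]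
          simp only [e4]
          rw [← Finset.smul_sum, ← hD.lsum, ← thM_eq, smul_smul,
            mul_inv_cancel₀ hq0, one_smul]
  have hcancel : ∀ k : Fin N, (((qc q)⁻¹ : ℂ) ^ (2 * (k : ℕ) + 2)) * qc q ^ (2 * exZ k) = 1 := by
    intro k
    rw [pospow, ← mul_pow, inv_mul_cancel₀ hq0, one_pow]
  have V2 : ∑ k : Fin N, ((qc q)⁻¹ ^ (2 * (k : ℕ) + 2)) •
        ((qc q ^ (-2:ℤ) * (ρ:ℂ) * qc q ^ (2 * exZ k) * kdelta k m) • D.lact (Zs N q k) D.thP)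
      = (qc q ^ (-2:ℤ) * (ρ:ℂ)) • D.lact (Zs N q m) D.thP := by
    rw [Finset.sum_eq_single m]
    · rw [kdelta, if_pos rfl, mul_one, smul_smul]
      congr 1
      calc ((qc q)⁻¹ : ℂ) ^ (2 * (m : ℕ) + 2) * (qc q ^ (-2:ℤ) * (ρ:ℂ) * qc q ^ (2 * exZ m))
          = (qc q ^ (-2:ℤ) * (ρ:ℂ)) * (((qc q)⁻¹ : ℂ) ^ (2 * (m : ℕ) + 2) * qc q ^ (2 * exZ m)) := by
            ring
        _ = qc q ^ (-2:ℤ) * (ρ:ℂ) := by rw [hcancel m, mul_one]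
    · intro k _ hk
      rw [kdelta, if_neg hk, mul_zero, zero_smul, smul_zero]
    · intro h
      exact absurd (Finset.mem_univ m) h
  have V3 : ∑ k : Fin N, ((qc q)⁻¹ ^ (2 * (k : ℕ) + 2)) •
        (((τ:ℂ) * qc q ^ (2 * exZ k) * kdelta k m) • D.lact (Zs N q k) D.thM)
      = (τ:ℂ) • D.lact (Zs N q m) D.thM := by
    rw [Finset.sum_eq_single m]
    · rw [kdelta, if_pos rfl, mul_one, smul_smul]
      congr 1
      calc ((qc q)⁻¹ : ℂ) ^ (2 * (m : ℕ) + 2) * ((τ:ℂ) * qc q ^ (2 * exZ m))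
          = (τ:ℂ) * (((qc q)⁻¹ : ℂ) ^ (2 * (m : ℕ) + 2) * qc q ^ (2 * exZ m)) := by
            ring
        _ = (τ:ℂ) := by rw [hcancel m, mul_one]
    · intro k _ hk
      rw [kdelta, if_neg hk, mul_zero, zero_smul, smul_zero]
    · intro h
      exact absurd (Finset.mem_univ m) h
  have V4 : ∑ k : Fin N, ((qc q)⁻¹ ^ (2 * (k : ℕ) + 2)) •
        ((sP N q * (ρ:ℂ) - 1) • D.lact (Zs N q k) (D.zzsP k m))
      = ((sP N q * (ρ:ℂ) - 1) * ((qc q)⁻¹) ^ 2) • D.lact (Zs N q m) D.thP := by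
    have e5 : ∀ k : Fin N, ((qc q)⁻¹ ^ (2 * (k : ℕ) + 2)) •
          ((sP N q * (ρ:ℂ) - 1) • D.lact (Zs N q k) (D.zzsP k m))
        = (sP N q * (ρ:ℂ) - 1) •
            D.lact (((qc q)⁻¹ ^ (2 * (k : ℕ) + 2)) • (Zs N q k * (Z N q k * Zs N q m))) D.thP := by
      intro k
      rw [smul_comm]
      congr 1
      simp only [zzsP]
      rw [← hD.lmul, hD.lsmulx]
    simp only [e5]
    rw [← Finset.smul_sum, ← hD.lsumx, Xgeo' hq0, hD.lsmulx, smul_smul]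
  have V5 : ∑ k : Fin N, ((qc q)⁻¹ ^ (2 * (k : ℕ) + 2)) •
        ((qc q ^ 2 * (sP N q * (τ:ℂ) - 1)) • D.lact (Zs N q k) (D.zzsM k m))
      = (qc q ^ 2 * (sP N q * (τ:ℂ) - 1) * ((qc q)⁻¹) ^ 2) • D.lact (Zs N q m) D.thM := by
    have e5 : ∀ k : Fin N, ((qc q)⁻¹ ^ (2 * (k : ℕ) + 2)) •
          ((qc q ^ 2 * (sP N q * (τ:ℂ) - 1)) • D.lact (Zs N q k) (D.zzsM k m))
        = (qc q ^ 2 * (sP N q * (τ:ℂ) - 1)) •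
            D.lact (((qc q)⁻¹ ^ (2 * (k : ℕ) + 2)) • (Zs N q k * (Z N q k * Zs N q m))) D.thM := by
      intro k
      rw [smul_comm]
      congr 1
      simp only [zzsM]
      rw [← hD.lmul, hD.lsmulx]
    simp only [e5]
    rw [← Finset.smul_sum, ← hD.lsumx, Xgeo' hq0, hD.lsmulx, smul_smul]
  rw [expand]
  simp only [key, smul_sub, smul_add]
  rw [Finset.sum_add_distrib, Finset.sum_add_distrib, Finset.sum_sub_distrib,
    Finset.sum_sub_distrib, V1, V2, V3, V4, V5]
  module

end PreCalc

end QSphere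
namespace QSphere

section ScalarIds

variable {N : ℕ} {q : ℝ}

lemma sP_eq (hN : 1 ≤ N) : sP N q = sT N q + 1 := by
  rw [sP, sT, Finset.range_eq_Ico, Finset.sum_eq_sum_Ico_succ_bot hN]
  simp [add_comm]

lemma I1 (hN : 1 ≤ N) : qc q ^ 2 * sP N q = sT N q + qc q ^ (2 * N) := by
  rw [sP, sT, Finset.mul_sum]
  have h1 : ∀ i ∈ Finset.range N, qc q ^ 2 * qc q ^ (2 * i) = qc q ^ (2 * (i + 1)) := by
    intro i _
    rw [← pow_add]
    congr 1
    ring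
  rw [Finset.sum_congr rfl h1]
  have h2 : ∑ i ∈ Finset.range N, qc q ^ (2 * (i + 1))
      = ∑ j ∈ Finset.Ico 1 (N + 1), qc q ^ (2 * j) := by
    rw [Finset.sum_Ico_eq_sum_range]
    simp only [Nat.add_sub_cancel]
    refine Finset.sum_congr rfl fun i _ => ?_
    congr 1
    ring
  rw [h2, Finset.sum_Ico_succ_top hN]

end ScalarIds

end QSphere
open QSphere in
/-- in any calculus with the structure equations of `Γ'''_{ρτ}`,
the one-form `θ₀ = θ₊ + q²(τ/ρ)θ₋` quasi-commutes with the generators of `X`. -/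
theorem stmt13 (N : ℕ) (hN : 2 ≤ N) (q : ℝ) (hq : q ≠ -1 ∧ q ≠ 0 ∧ q ≠ 1)
    (ρ τ : ℝ) (hρ : ρ ≠ 0) (hτ : τ ≠ 0)
    (D : PreCalc N q) (hD : D.IsFODC) (hEq : D.EqPPP ρ τ) :
    D.QuasiComm (D.theta0 1 (qc q ^ 2 * ((τ:ℂ) / (ρ:ℂ)))) := by
  obtain ⟨-, hqz, -⟩ := hq
  have hq0 : qc q ≠ 0 := hq0_of hqz
  have hρ0 : (ρ:ℂ) ≠ 0 := Complex.ofReal_ne_zero.mpr hρ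
  have hτ0 : (τ:ℂ) ≠ 0 := Complex.ofReal_ne_zero.mpr hτ
  have hN1 : 1 ≤ N := le_trans one_le_two hN
  have hI1 := I1 (q := q) hN1
  have hsP := sP_eq (q := q) hN1
  have hsT : sT N q = qc q ^ 2 * sP N q - qc q ^ (2 * N) := by
    linear_combination -hI1
  have em2 : qc q ^ (-2:ℤ) = ((qc q)⁻¹) ^ 2 := by
    rw [show (-2:ℤ) = -((2:ℕ):ℤ) by norm_num, znegpow]
  have e2N : qc q ^ (2 * (N:ℤ)) = qc q ^ (2 * N) := by
    rw [show (2 * (N:ℤ)) = ((2 * N : ℕ) : ℤ) by push_cast; ring, zpow_natCast]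
  have e2N2 : qc q ^ (2 * (N:ℤ) - 2) = qc q ^ (2 * N) * ((qc q)⁻¹) ^ 2 := by
    rw [show (2 * (N:ℤ) - 2) = 2 * (N:ℤ) + (-2) by ring, zpow_add₀ hq0, e2N, em2]
  intro m
  refine ⟨((qc q)⁻¹) ^ 2, qc q ^ 2, ?_, ?_⟩
  · have hrs : D.ract (D.theta0 1 (qc q ^ 2 * ((τ:ℂ)/(ρ:ℂ)))) (Z N q m)
        = D.ract D.thP (Z N q m)
          + (qc q ^ 2 * ((τ:ℂ)/(ρ:ℂ))) • D.ract D.thM (Z N q m) := by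
      simp only [PreCalc.theta0, one_smul]
      rw [hD.radd, hD.rsmul]
    have hls : D.lact (Z N q m) (D.theta0 1 (qc q ^ 2 * ((τ:ℂ)/(ρ:ℂ))))
        = D.lact (Z N q m) D.thP
          + (qc q ^ 2 * ((τ:ℂ)/(ρ:ℂ))) • D.lact (Z N q m) D.thM := by
      simp only [PreCalc.theta0, one_smul]
      rw [hD.ladd, hD.lsmul]
    rw [hrs, hls, PreCalc.thP_z hD hEq hq0 m, PreCalc.thM_z hD hEq hq0 m]
    match_scalars
    · simp only [em2, e2N, e2N2, hsT]
      field_simp [hq0, hρ0, hτ0]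
      ring
    · simp only [em2, e2N, e2N2, hsT]
      field_simp [hq0, hρ0, hτ0]
      ring
  · have hrs : D.ract (D.theta0 1 (qc q ^ 2 * ((τ:ℂ)/(ρ:ℂ)))) (Zs N q m)
        = D.ract D.thP (Zs N q m)
          + (qc q ^ 2 * ((τ:ℂ)/(ρ:ℂ))) • D.ract D.thM (Zs N q m) := by
      simp only [PreCalc.theta0, one_smul]
      rw [hD.radd, hD.rsmul]
    have hls : D.lact (Zs N q m) (D.theta0 1 (qc q ^ 2 * ((τ:ℂ)/(ρ:ℂ))))
        = D.lact (Zs N q m) D.thP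
          + (qc q ^ 2 * ((τ:ℂ)/(ρ:ℂ))) • D.lact (Zs N q m) D.thM := by
      simp only [PreCalc.theta0, one_smul]
      rw [hD.ladd, hD.lsmul]
    rw [hrs, hls, PreCalc.thP_zs hD hEq hq0 m, PreCalc.thM_zs hD hEq hq0 m]
    match_scalars
    · simp only [em2, hsP]
      field_simp [hq0, hρ0, hτ0]
      ring
    · simp only [em2, hsP]
      field_simp [hq0, hρ0, hτ0]
      ring
end
end

section
/- Let α be a real number with α ∉ {0, q⁻²} and let τ be a real number. Suppose (Γ, d) is a first order differential calculus on X satisfying, for all k, l ∈ {1, …, N}: dz_k·z_l = qα Σ_{a,b} (R⁻¹)^{ab}_{kl} z_a·dz_b + (q²α−1) z_k·dz_l + q²α²(1−s̃τ) z_k z_l·θ₊ + q²(1−α s̃ τ) z_k z_l·θ₋; dz*_k·z*_l = q⁻¹α⁻¹ Σ_{a,b} R̄^{ab}_{kl} z*_a·dz*_b + (q⁻²α⁻¹−1) z*_k·dz*_l + (1−s̃τ) z*_k z*_l·θ₊ + α⁻²(1−α s̃ τ) z*_k z*_l·θ₋; dz_k·z*_l = q⁻¹α⁻¹ Σ_{a,b}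 (R←⁻¹)^{ab}_{kl} z*_a·dz_b + (q²α−1) z_k·dz*_l − q²α(1−sτ) z_k z*_l·θ₊ − ατ q^{2k} δ_{kl} θ₊ − α⁻¹(1−q²α sτ) z_k z*_l·θ₋ − τ q^{2k} δ_{kl} θ₋; dz*_k·z_l = qα Σ_{a,b} (R→)^{ab}_{kl} z_a·dz*_b + (q⁻²α⁻¹−1) z*_k·dz_l − q²α(1−sτ) z*_k z_l·θ₊ − ατ δ_{kl} θ₊ − α⁻¹(1−q²α sτ) z*_k z_l·θ₋ − τ δ_{kl} θ₋. Suppose moreover that θ₊ + α⁻¹ θ₋ = 0 in Γ. Then, with λ := α⁻¹, the structure equations of the factorised calculus hold for all k, l ∈ {1, …, N}: dz_k·z_l = qλ⁻¹ Σ_{a,b} (R⁻¹)^{ab}_{kl} z_a·dz_b + (q²λ⁻¹−1) z_k·dz_l + q²λ⁻¹(λ⁻¹−1) z_k z_l·θ₊; dz*_k·z*_l = q⁻¹λ Σ_{a,b} R̄^{ab}_{kl} z*_a·dz*_b + (q⁻²λ−1) z*_k·dz*_l − (λ−1) z*_k z*_l·θ₊; dz_k·z*_l = q⁻¹λ Σ_{a,b}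 (R←⁻¹)^{ab}_{kl} z*_a·dz_b + (q²λ⁻¹−1) z_k·dz*_l − (q²λ⁻¹−1) z_k z*_l·θ₊; dz*_k·z_l = qλ⁻¹ Σ_{a,b} (R→)^{ab}_{kl} z_a·dz*_b + (q⁻²λ−1) z*_k·dz_l − (q²λ⁻¹−1) z*_k z_l·θ₊. -/
noncomputable section

open scoped BigOperators

open QSphere in
/-- factorising `Γ_{ατ}` by the relation `θ₊ + α⁻¹θ₋ = 0`
yields the structure equations of `Γ̃_λ` with `λ = α⁻¹`. -/
theorem stmt15 (N : ℕ) (hN : 2 ≤ N) (q : ℝ) (hq : q ≠ -1 ∧ q ≠ 0 ∧ q ≠ 1)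
    (α : ℝ) (hα : α ≠ 0 ∧ α ≠ q ^ (-2:ℤ)) (τ : ℝ)
    (D : PreCalc N q) (hD : D.IsFODC) (hEq : D.EqAT α τ)
    (hRel : D.RelHolds (α:ℂ)⁻¹) :
    D.EqTl (α:ℂ)⁻¹ := by
  obtain ⟨hα0, -⟩ := hα
  have hαc : (α:ℂ) ≠ 0 := by exact_mod_cast hα0
  obtain ⟨hl1, hl2, hl3, hl4, hl5, hl6, hrest⟩ := hD
  have h : (α:ℂ)⁻¹ • D.thM = -D.thP := eq_neg_of_add_eq_zero_right hRel
  have hM : D.thM = (-(α:ℂ)) • D.thP := by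
    calc D.thM = (α:ℂ) • ((α:ℂ)⁻¹ • D.thM) := by
          rw [smul_smul, mul_inv_cancel₀ hαc, one_smul]
      _ = (α:ℂ) • (-D.thP) := by rw [h]
      _ = (-(α:ℂ)) • D.thP := by rw [smul_neg, neg_smul]
  have hzzM : ∀ k l, D.zzM k l = (-(α:ℂ)) • D.zzP k l := fun k l ↦ by
    rw [PreCalc.zzM, PreCalc.zzP, hM, hl6]
  have hzszsM : ∀ k l, D.zszsM k l = (-(α:ℂ)) • D.zszsP k l := fun k l ↦ by
    rw [PreCalc.zszsM, PreCalc.zszsP, hM, hl6]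
  have hzzsM : ∀ k l, D.zzsM k l = (-(α:ℂ)) • D.zzsP k l := fun k l ↦ by
    rw [PreCalc.zzsM, PreCalc.zzsP, hM, hl6]
  have hzszM : ∀ k l, D.zszM k l = (-(α:ℂ)) • D.zszP k l := fun k l ↦ by
    rw [PreCalc.zszM, PreCalc.zszP, hM, hl6]
  intro k l
  obtain ⟨h1, h2, h3, h4⟩ := hEq k l
  refine ⟨?_, ?_, ?_, ?_⟩
  · rw [h1, hzzM]
    match_scalars <;> field_simp <;> ring
  · rw [h2, hzszsM]
    match_scalars <;> field_simp <;> ring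
  · rw [h3, hzzsM, hM]
    match_scalars <;> field_simp <;> ring
  · rw [h4, hzszM, hM]
    match_scalars <;> field_simp <;> ring
end
end

section
/- Let ρ and τ be nonzero real numbers. Suppose (Γ, d) is a first order differential calculus on X satisfying, for all k, l ∈ {1, …, N}: dz_k·z_l = q⁻¹ Σ_{a,b} (R⁻¹)^{ab}_{kl} z_a·dz_b − q⁻²(ρ/τ)(s̃ρ−1) z_k z_l·θ₊ − (ρ/τ)(s̃τ−q²) z_k z_l·θ₋; dz*_k·z*_l = q Σ_{a,b} R̄^{ab}_{kl} z*_a·dz*_b − (τ/ρ)(s̃ρ−1) z*_k z*_l·θ₊ − q²(τ/ρ)(s̃τ−q²) z*_k z*_l·θ₋; dz_k·z*_l = q Σ_{a,b} (R←⁻¹)^{ab}_{kl} z*_a·dz_b − q⁻²ρ q^{2k} δ_{kl} θ₊ − τ q^{2k} δ_{kl} θ₋ + (sρ−1) z_k z*_l·θ₊ + q²(sτ−1) z_k z*_l·θ₋; dz*_k·z_l = q⁻¹ Σ_{a,b} (R→)^{ab}_{kl} z_a·dz*_b − q^{2N−2}ρ δ_{kl} θ₊ − q^{2N}τ δ_{kl}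 θ₋ + (sρ−1) z*_k z_l·θ₊ + q²(sτ−1) z*_k z_l·θ₋. Suppose moreover that θ₊ + q²(τ/ρ) θ₋ = 0 in Γ. Then, with λ := q²τ/ρ, the following structure equations hold for all k, l ∈ {1, …, N}: dz_k·z_l = q⁻¹ Σ_{a,b} (R⁻¹)^{ab}_{kl} z_a·dz_b − λ⁻¹(q⁴λ⁻¹−1) z_k z_l·θ₊; dz*_k·z*_l = q Σ_{a,b} R̄^{ab}_{kl} z*_a·dz*_b − q⁻²λ(q⁴λ⁻¹−1) z*_k z*_l·θ₊; dz_k·z*_l = q Σ_{a,b} (R←⁻¹)^{ab}_{kl} z*_a·dz_b + (q²λ⁻¹−1) z_k z*_l·θ₊; dz*_k·z_l = q⁻¹ Σ_{a,b} (R→)^{ab}_{kl} z_a·dz*_b + (q²λ⁻¹−1) z*_k z_l·θ₊. -/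
noncomputable section

open scoped BigOperators

private theorem pow_two_int_eq (x : ℂ) : x ^ (2:ℤ) = x ^ 2 := rfl

set_option maxHeartbeats 1000000 in
open QSphere in
/-- factorising `Γ'''_{ρτ}` by the relation `θ₊ + q²(τ/ρ)θ₋ = 0`
yields the structure equations of `Γ̃'_λ` with `λ = q²τ/ρ`. -/
theorem stmt16 (N : ℕ) (hN : 2 ≤ N) (q : ℝ) (hq : q ≠ -1 ∧ q ≠ 0 ∧ q ≠ 1)
    (ρ τ : ℝ) (hρ : ρ ≠ 0) (hτ : τ ≠ 0)
    (D : PreCalc N q) (hD : D.IsFODC) (hEq : D.EqPPP ρ τ)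
    (hRel : D.RelHolds (qc q ^ 2 * ((τ:ℂ) / (ρ:ℂ)))) :
    D.EqTp (qc q ^ 2 * ((τ:ℂ) / (ρ:ℂ))) := by
  obtain ⟨hq1, hq0, hq2⟩ := hq
  have hqc : qc q ≠ 0 := by
    simpa [qc, Complex.ofReal_ne_zero] using hq0
  have hτc : (τ:ℂ) ≠ 0 := by exact_mod_cast hτ
  have hρc : (ρ:ℂ) ≠ 0 := by exact_mod_cast hρ
  set lam : ℂ := qc q ^ 2 * ((τ:ℂ)/(ρ:ℂ)) with hlamdef
  have hlam : lam ≠ 0 := mul_ne_zero (pow_ne_zero _ hqc) (div_ne_zero hτc hρc)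
  obtain ⟨-,-,-,-,-,hl6,-⟩ := hD
  have hthM : D.thM = (-lam⁻¹) • D.thP := by
    have h : lam • D.thM = -D.thP := by
      have h0 := hRel
      unfold PreCalc.RelHolds at h0
      rw [add_comm] at h0
      exact eq_neg_of_add_eq_zero_left h0
    calc D.thM = lam⁻¹ • (lam • D.thM) := (inv_smul_smul₀ hlam _).symm
      _ = (-lam⁻¹) • D.thP := by rw [h, smul_neg, neg_smul]
  have hM : ∀ x : X N q, D.lact x D.thM = (-lam⁻¹) • D.lact x D.thP := by
    intro x; rw [hthM, hl6]
  intro k l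
  obtain ⟨e1, e2, e3, e4⟩ := hEq k l
  have hzzM : D.zzM k l = (-lam⁻¹) • D.zzP k l := hM _
  have hzszsM : D.zszsM k l = (-lam⁻¹) • D.zszsP k l := hM _
  have hzzsM : D.zzsM k l = (-lam⁻¹) • D.zzsP k l := hM _
  have hzszM : D.zszM k l = (-lam⁻¹) • D.zszP k l := hM _
  have hzp : qc q ^ (-2:ℤ) = (qc q ^ 2)⁻¹ := by
    rw [zpow_neg]; norm_cast
  have hcoef : ∀ c : ℂ, True := fun _ => trivial
  refine ⟨?_, ?_, ?_, ?_⟩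
  · rw [e1, hzzM]
    match_scalars <;> (
      simp only [hlamdef, hzp]
      try field_simp
      try rw [div_eq_iff (by simp [hqc, hτc, hρc])]
      try ring1
      try (simp only [zpow_sub₀ hqc]; field_simp; ring1))
  · rw [e2, hzszsM]
    match_scalars <;> (
      simp only [hlamdef, hzp]
      try field_simp
      try rw [div_eq_iff (by simp [hqc, hτc, hρc])]
      try ring1
      try (simp only [zpow_sub₀ hqc]; field_simp; ring1))
  · rw [e3, hthM, hzzsM]
    match_scalars <;> (
      simp only [hlamdef, hzp]
      try field_simp
      try rw [div_eq_iff (by simp [hqc, hτc, hρc])]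
      try ring1
      try (simp only [zpow_sub₀ hqc]; field_simp; ring1))
  · rw [e4, hthM, hzszM]
    match_scalars <;> (
      simp only [hlamdef, hzp, zpow_sub₀ hqc]
      try field_simp
      try rw [div_eq_iff (by simp [hqc, hτc, hρc])]
      try ring1
      try (rw [div_add' _ _ _ (zpow_ne_zero 2 hqc), div_eq_iff (zpow_ne_zero 2 hqc)]
           simp only [pow_two_int_eq]
           ring1)
      try (rw [div_add' _ _ _ (pow_ne_zero 2 hqc), div_eq_iff (pow_ne_zero 2 hqc)]
           simp only [pow_two_int_eq]
           ring1))
end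
end
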